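/- arXiv:2512.08496 — 7 statements merged into one kernel-verified Lean document; each statement's English description precedes it below -/
import Mathlib

section
/- Let Z₁ and Z₂ be independent standard Gaussian random variables, let ρ ∈ [−1,1], and set Y := ρZ₁ + √(1−ρ²)Z₂. Then for all natural numbers p, q: E[He_p(Z₁)·He_q(Y)] = q!·ρ^q if p = q, and E[He_p(Z₁)·He_q(Y)] = 0 if p ≠ q. -/
open MeasureTheory ProbabilityTheory Filter Set
open scoped Topology

/-- The probabilists' Hermite polynomials. -/
noncomputable def He : ℕ → ℝ → ℝ
  | 0 => fun _ => 1
  | 1 => fun z => z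
  | (n + 2) => fun z => z * He (n + 1) z - (n + 1 : ℝ) * He n z

lemma he_succ (n : ℕ) (x : ℝ) : He (n + 1) x = x * He n x - (n : ℝ) * He (n - 1) x := by
  match n with
  | 0 => simp [He]
  | (m+1) => simp [He]

lemma he_hasDerivAt : ∀ (n : ℕ) (x : ℝ), HasDerivAt (He n) ((n : ℝ) * He (n - 1) x) x := by
  intro n
  induction n using Nat.strong_induction_on with
  | _ n ih =>
    match n with
    | 0 => intro x; simp only [Nat.cast_zero, zero_mul]; exact hasDerivAt_const x (1:ℝ)
    | 1 => intro x; have h11 : ((1:ℕ):ℝ) * He (1-1) x = 1 := (by simp [He]); rw [h11]; exact hasDerivAt_id' x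
    | (m + 2) =>
      intro x
      have h1 := ih (m + 1) (by omega) x
      have h0 := ih m (by omega) x
      have : HasDerivAt (He (m+2))
          (1 * He (m+1) x + x * ((m+1 : ℝ) * He m x) - (m+1 : ℝ) * ((m : ℝ) * He (m-1) x)) x := by
        have : He (m + 2) = fun z => z * He (m + 1) z - (m + 1 : ℝ) * He m z := by
          funext z; simp [He]
        rw [this]
        exact (((hasDerivAt_id' x).mul h1).sub ((h0.const_mul ((m+1:ℝ))))).congr_deriv
          (by simp only [Nat.cast_add, Nat.cast_one, Nat.add_sub_cancel])
      convert this using 1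
      have hr : m + 2 - 1 = m + 1 := rfl
      rw [hr]
      have hm1 : He (m + 1) x = x * He m x - (m : ℝ) * He (m - 1) x := he_succ m x
      push_cast
      rw [hm1]; ring

lemma he_continuous (n : ℕ) : Continuous (He n) :=
  continuous_iff_continuousAt.2 fun x => (he_hasDerivAt n x).differentiableAt.continuousAt

lemma he_bound : ∀ n : ℕ, ∃ C : ℝ, 0 < C ∧ ∀ x : ℝ, |He n x| ≤ C * (1 + |x|) ^ n := by
  intro n
  induction n using Nat.strong_induction_on with
  | _ n ih =>
    match n with
    | 0 => exact ⟨1, one_pos, fun x => by simp [He]⟩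
    | 1 => exact ⟨1, one_pos, fun x => by simp [He]⟩
    | (m + 2) =>
      obtain ⟨C1, hC1, hb1⟩ := ih (m + 1) (by omega)
      obtain ⟨C0, hC0, hb0⟩ := ih m (by omega)
      refine ⟨C1 + (m + 1 : ℝ) * C0, by positivity, fun x => ?_⟩
      have h1x : (0:ℝ) < 1 + |x| := by positivity
      have e : He (m + 2) x = x * He (m+1) x - (m+1 : ℝ) * He m x := by simp [He]
      rw [e]
      have h1 := hb1 x
      have h0 := hb0 x
      have hxle : |x| ≤ 1 + |x| := by linarith
      calc |x * He (m+1) x - (m+1 : ℝ) * He m x|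
          ≤ |x| * |He (m+1) x| + (m+1 : ℝ) * |He m x| := by
            refine (abs_sub _ _).trans ?_
            rw [abs_mul, abs_mul, abs_of_nonneg (by positivity : (0:ℝ) ≤ (m:ℝ)+1)]
        _ ≤ (1 + |x|) * (C1 * (1 + |x|) ^ (m+1)) + (m+1 : ℝ) * (C0 * (1 + |x|) ^ m) := by
            gcongr
        _ ≤ C1 * (1 + |x|) ^ (m+2) + (m+1 : ℝ) * (C0 * (1 + |x|) ^ (m+2)) := by
            have hp : (1 + |x|) ^ m ≤ (1 + |x|) ^ (m + 2) :=
              pow_le_pow_right₀ (by linarith [abs_nonneg x]) (by omega)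
            have h3 : (1+|x|) * (C1 * (1+|x|)^(m+1)) = C1 * (1+|x|)^(m+2) := by ring
            rw [h3]
            gcongr
        _ = (C1 + (m + 1 : ℝ) * C0) * (1 + |x|) ^ (m + 2) := by ring

open scoped ENNReal NNReal

open Real in
lemma integrable_one_add_abs_pow_gauss (n : ℕ) :
    Integrable (fun x : ℝ => (1+|x|)^n * Real.exp (-x^2/2)) := by
  have h2n : Integrable (fun x : ℝ => x^(2*n) * Real.exp (-(1/2:ℝ)*x^2)) := by
    have hs : (-1:ℝ) < ((2*n : ℕ) : ℝ) := by
      have : (0:ℝ) ≤ ((2*n:ℕ):ℝ) := Nat.cast_nonneg _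
      linarith
    have h := integrable_rpow_mul_exp_neg_mul_sq (b := (1/2:ℝ)) (by norm_num) hs
    apply h.congr
    filter_upwards with x
    rw [Real.rpow_natCast]
  have hexp : Integrable (fun x : ℝ => Real.exp (-(1/2:ℝ)*x^2)) :=
    integrable_exp_neg_mul_sq (by norm_num)
  have hg : Integrable (fun x : ℝ =>
      (2:ℝ)^n * (2 * Real.exp (-(1/2:ℝ)*x^2) + x^(2*n) * Real.exp (-(1/2:ℝ)*x^2))) :=
    ((hexp.const_mul 2).add h2n).const_mul _
  apply hg.mono'
  · exact (((continuous_const.add continuous_abs).pow n).mul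
      (Real.continuous_exp.comp (by continuity))).aestronglyMeasurable
  · refine Filter.Eventually.of_forall fun x => ?_
    have hx : (0:ℝ) ≤ |x| := abs_nonneg x
    have he : Real.exp (-x^2/2) = Real.exp (-(1/2:ℝ)*x^2) := by ring_nf
    have key : (1+|x|)^n ≤ 2^n * (2 + x^(2*n)) := by
      have h1 : (1+|x|)^n ≤ (2 * max 1 |x|)^n := by
        apply pow_le_pow_left₀ (by linarith)
        rcases le_total |x| 1 with h | h
        · rw [max_eq_left h]; linarith
        · rw [max_eq_right h]; linarith
      have h2 : (2 * max 1 |x|)^n = 2^n * (max 1 |x|)^n := by rw [mul_pow]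
      have hx2n0 : (0:ℝ) ≤ x^(2*n) := by rw [pow_mul]; positivity
      have habs : |x|^(2*n) = x^(2*n) := by rw [pow_mul, pow_mul, sq_abs]
      have h3 : (max 1 |x|)^n ≤ 1 + x^(2*n) := by
        rcases le_total |x| 1 with h | h
        · rw [max_eq_left h, one_pow]; linarith
        · rw [max_eq_right h]
          have h4 : |x|^n ≤ |x|^(2*n) := pow_le_pow_right₀ h (by omega)
          rw [habs] at h4; linarith
      calc (1+|x|)^n ≤ 2^n * (max 1 |x|)^n := by rw [← h2]; exact h1
        _ ≤ 2^n * (1 + x^(2*n)) := by gcongr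
        _ ≤ 2^n * (2 + x^(2*n)) := by gcongr; norm_num
    rw [Real.norm_eq_abs, abs_of_nonneg (by positivity), he]
    calc (1+|x|)^n * Real.exp (-(1/2:ℝ)*x^2)
        ≤ (2^n * (2 + x^(2*n))) * Real.exp (-(1/2:ℝ)*x^2) := by
          gcongr
        _ = (2:ℝ)^n * (2 * Real.exp (-(1/2:ℝ)*x^2) + x^(2*n) * Real.exp (-(1/2:ℝ)*x^2)) := by
          ring

noncomputable def gpdf (x : ℝ) : ℝ := gaussianPDFReal 0 1 x

lemma gpdf_eq : gpdf = fun x => (Real.sqrt (2*Real.pi))⁻¹ * Real.exp (-x^2/2) := by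
  funext x
  simp [gpdf, gaussianPDFReal]

lemma gpdf_nonneg (x : ℝ) : 0 ≤ gpdf x := gaussianPDFReal_nonneg 0 1 x

lemma gpdf_hasDerivAt (x : ℝ) : HasDerivAt (fun y => -gpdf y) (x * gpdf x) x := by
  simp only [gpdf_eq]
  have h1 : HasDerivAt (fun y : ℝ => -y^2/2) (-x) x := by
    have := ((hasDerivAt_pow 2 x).neg).div_const 2
    refine this.congr_deriv ?_
    simp only [Nat.cast_ofNat, Nat.reduceSub, pow_one]; ring
  have h2 : HasDerivAt (fun y : ℝ => Real.exp (-y^2/2)) (Real.exp (-x^2/2) * (-x)) x := h1.exp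
  have := (h2.const_mul ((Real.sqrt (2*Real.pi))⁻¹)).neg
  refine this.congr_deriv ?_
  ring

lemma gaussianReal_eq : gaussianReal 0 1
    = (volume : Measure ℝ).withDensity (fun x => ((gpdf x).toNNReal : ℝ≥0∞)) := by
  rw [gaussianReal_of_var_ne_zero 0 one_ne_zero]
  rfl

lemma meas_toNNReal_gpdf : Measurable (fun x => (gpdf x).toNNReal) :=
  (measurable_gaussianPDFReal 0 1).real_toNNReal

lemma integral_gauss_eq (f : ℝ → ℝ) :
    ∫ x, f x ∂(gaussianReal 0 1) = ∫ x, f x * gpdf x := by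
  rw [gaussianReal_eq, integral_withDensity_eq_integral_smul meas_toNNReal_gpdf]
  congr 1; funext x
  simp [NNReal.smul_def, Real.coe_toNNReal _ (gpdf_nonneg x), mul_comm]

lemma integrable_gauss_iff (f : ℝ → ℝ) :
    Integrable f (gaussianReal 0 1) ↔ Integrable (fun x => f x * gpdf x) := by
  rw [gaussianReal_eq, integrable_withDensity_iff_integrable_smul meas_toNNReal_gpdf]
  have heq : ∀ x, (gpdf x).toNNReal • f x = f x * gpdf x := fun x => by
    simp [NNReal.smul_def, Real.coe_toNNReal _ (gpdf_nonneg x), mul_comm]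
  constructor
  · intro h
    exact h.congr (Filter.Eventually.of_forall heq)
  · intro h
    exact h.congr (Filter.Eventually.of_forall fun x => (heq x).symm)

/-- Integrability of functions of polynomial growth against the standard Gaussian. -/
lemma integrable_gauss {f : ℝ → ℝ} (hm : AEStronglyMeasurable f volume)
    {C : ℝ} {n : ℕ} (hb : ∀ x, |f x| ≤ C * (1+|x|)^n) :
    Integrable f (gaussianReal 0 1) := by
  rw [integrable_gauss_iff]
  have hg : Integrable (fun x : ℝ => (C * (Real.sqrt (2*Real.pi))⁻¹) *
      ((1+|x|)^n * Real.exp (-x^2/2))) := (integrable_one_add_abs_pow_gauss n).const_mul _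
  apply hg.mono' (hm.mul (Continuous.aestronglyMeasurable (by rw [gpdf_eq]; continuity)))
  refine Filter.Eventually.of_forall fun x => ?_
  have hC : 0 ≤ C := le_trans (abs_nonneg _) ((hb 0).trans_eq (by norm_num))
  show ‖f x * gpdf x‖ ≤ _
  rw [Real.norm_eq_abs, abs_mul, abs_of_nonneg (gpdf_nonneg x), gpdf_eq]
  calc |f x| * ((Real.sqrt (2*Real.pi))⁻¹ * Real.exp (-x^2/2))
      ≤ (C * (1+|x|)^n) * ((Real.sqrt (2*Real.pi))⁻¹ * Real.exp (-x^2/2)) := by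
        gcongr; exact hb x
    _ = (C * (Real.sqrt (2*Real.pi))⁻¹) * ((1+|x|)^n * Real.exp (-x^2/2)) := by ring

/-- Stein's lemma / Gaussian integration by parts. -/
lemma stein {f f' : ℝ → ℝ} (hd : ∀ x, HasDerivAt f (f' x) x)
    (hm' : AEStronglyMeasurable f' volume)
    {C : ℝ} {n : ℕ} (hbf : ∀ x, |f x| ≤ C * (1+|x|)^n)
    {C' : ℝ} {m : ℕ} (hbf' : ∀ x, |f' x| ≤ C' * (1+|x|)^m) :
    ∫ x, x * f x ∂(gaussianReal 0 1) = ∫ x, f' x ∂(gaussianReal 0 1) := by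
  have hfc : Continuous f := by
    rw [continuous_iff_continuousAt]; exact fun x => (hd x).differentiableAt.continuousAt
  have hgc : Continuous gpdf := by rw [gpdf_eq]; continuity
  have hC : 0 ≤ C := le_trans (abs_nonneg _) ((hbf 0).trans_eq (by norm_num))
  have hC' : 0 ≤ C' := le_trans (abs_nonneg _) ((hbf' 0).trans_eq (by norm_num))
  -- bound helper
  have key : ∀ (g : ℝ → ℝ), AEStronglyMeasurable g volume → ∀ (D : ℝ) (k : ℕ),
      (∀ x, |g x| ≤ D * (1+|x|)^k) → Integrable (fun x => g x * gpdf x) := by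
    intro g hgm D k hgb
    rw [← integrable_gauss_iff]
    exact integrable_gauss hgm hgb
  have h1 : Integrable (fun x => f x * (x * gpdf x)) := by
    have := key (fun x => x * f x) ((Continuous.aestronglyMeasurable (by continuity)))
      (C) (n+1) (fun x => by
        rw [abs_mul]
        calc |x| * |f x| ≤ (1+|x|) * (C * (1+|x|)^n) :=
              mul_le_mul (by linarith [abs_nonneg x]) (hbf x) (abs_nonneg _) (by positivity)
          _ = C * (1+|x|)^(n+1) := by ring)
    apply this.congr
    filter_upwards with x; ring
  have h2 : Integrable (fun x => f' x * (- gpdf x)) := by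
    have := key f' hm' C' m hbf'
    apply (this.neg).congr
    filter_upwards with x
    simp only [Pi.neg_apply]; ring
  have h3 : Integrable (fun x => f x * (- gpdf x)) := by
    have := key f hfc.aestronglyMeasurable C n hbf
    apply (this.neg).congr
    filter_upwards with x
    simp only [Pi.neg_apply]; ring
  have := integral_mul_deriv_eq_deriv_mul_of_integrable
    (u := f) (v := fun x => -gpdf x) (u' := f') (v' := fun x => x * gpdf x)
    (fun x _ => hd x) (fun x _ => gpdf_hasDerivAt x) (by exact h1) (by exact h2) (by exact h3)
  rw [integral_gauss_eq, integral_gauss_eq]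
  calc ∫ x, (x * f x) * gpdf x = ∫ x, f x * (x * gpdf x) := by congr 1; funext x; ring
    _ = - ∫ x, f' x * (-gpdf x) := this
    _ = ∫ x, f' x * gpdf x := by rw [← integral_neg]; congr 1; funext x; ring

/-- Stein's lemma with integrability hypotheses w.r.t. the Gaussian measure. -/
lemma stein' {f f' : ℝ → ℝ} (hd : ∀ x, HasDerivAt f (f' x) x)
    (hint1 : Integrable (fun x => x * f x) (gaussianReal 0 1))
    (hint2 : Integrable f (gaussianReal 0 1))
    (hint3 : Integrable f' (gaussianReal 0 1)) :
    ∫ x, x * f x ∂(gaussianReal 0 1) = ∫ x, f' x ∂(gaussianReal 0 1) := by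
  rw [integrable_gauss_iff] at hint1 hint2 hint3
  have h1 : Integrable (fun x => f x * (x * gpdf x)) := by
    apply hint1.congr
    filter_upwards with x; ring
  have h2 : Integrable (fun x => f' x * (- gpdf x)) := by
    apply hint3.neg.congr
    filter_upwards with x
    simp only [Pi.neg_apply]; ring
  have h3 : Integrable (fun x => f x * (- gpdf x)) := by
    apply hint2.neg.congr
    filter_upwards with x
    simp only [Pi.neg_apply]; ring
  have := integral_mul_deriv_eq_deriv_mul_of_integrable
    (u := f) (v := fun x => -gpdf x) (u' := f') (v' := fun x => x * gpdf x)
    (fun x _ => hd x) (fun x _ => gpdf_hasDerivAt x) (by exact h1) (by exact h2) (by exact h3)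
  rw [integral_gauss_eq, integral_gauss_eq]
  calc ∫ x, (x * f x) * gpdf x = ∫ x, f x * (x * gpdf x) := by congr 1; funext x; ring
    _ = - ∫ x, f' x * (-gpdf x) := this
    _ = ∫ x, f' x * gpdf x := by rw [← integral_neg]; congr 1; funext x; ring

lemma he_comp_bound (q : ℕ) : ∃ C : ℝ, 0 < C ∧ ∀ ρ β : ℝ, |ρ| ≤ 1 → |β| ≤ 1 →
    ∀ x y : ℝ, |He q (ρ*x+β*y)| ≤ C * ((1+|x|)^q * (1+|y|)^q) := by
  obtain ⟨C, hC, hb⟩ := he_bound q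
  refine ⟨C, hC, fun ρ β hρ hβ x y => ?_⟩
  have h1 : |ρ*x+β*y| ≤ |x| + |y| := by
    calc |ρ*x+β*y| ≤ |ρ*x| + |β*y| := abs_add_le _ _
      _ ≤ |x| + |y| := by
        rw [abs_mul, abs_mul]
        have hx := abs_nonneg x; have hy := abs_nonneg y
        nlinarith
  have h2 : 1 + |ρ*x+β*y| ≤ (1+|x|) * (1+|y|) := by
    have hx := abs_nonneg x; have hy := abs_nonneg y
    nlinarith
  calc |He q (ρ*x+β*y)| ≤ C * (1+|ρ*x+β*y|)^q := hb _
    _ ≤ C * ((1+|x|) * (1+|y|))^q := by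
        gcongr
    _ = C * ((1+|x|)^q * (1+|y|)^q) := by rw [mul_pow]

lemma he_comp_hasDerivAt_x (q : ℕ) (ρ β y x : ℝ) :
    HasDerivAt (fun x => He q (ρ*x+β*y)) ((q:ℝ) * He (q-1) (ρ*x+β*y) * ρ) x := by
  have haff : HasDerivAt (fun x : ℝ => ρ*x+β*y) ρ x := by
    simpa using ((hasDerivAt_id x).const_mul ρ).add_const (β*y)
  exact (he_hasDerivAt q (ρ*x+β*y)).comp x haff

lemma he_comp_hasDerivAt_y (q : ℕ) (ρ β x y : ℝ) :
    HasDerivAt (fun y => He q (ρ*x+β*y)) ((q:ℝ) * He (q-1) (ρ*x+β*y) * β) y := by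
  have haff : HasDerivAt (fun y : ℝ => ρ*x+β*y) β y := by
    simpa using ((hasDerivAt_id y).const_mul β).const_add (ρ*x)
  exact (he_hasDerivAt q (ρ*x+β*y)).comp y haff

lemma integrable_he_he (a b : ℕ) {ρ β : ℝ} (hρ : |ρ| ≤ 1) (hβ : |β| ≤ 1) (y : ℝ) :
    Integrable (fun x => He a x * He b (ρ*x+β*y)) (gaussianReal 0 1) ∧
    Integrable (fun x => x * (He a x * He b (ρ*x+β*y))) (gaussianReal 0 1) := by
  obtain ⟨Ca, hCa, hba⟩ := he_bound a
  obtain ⟨Cb, hCb, hbb⟩ := he_comp_bound b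
  have hcont : Continuous (fun x => He a x * He b (ρ*x+β*y)) :=
    (he_continuous a).mul ((he_continuous b).comp (by continuity))
  have hbd : ∀ x : ℝ, |He a x * He b (ρ*x+β*y)|
      ≤ (Ca * (Cb * (1+|y|)^b)) * (1+|x|)^(a+b) := by
    intro x
    rw [abs_mul]
    calc |He a x| * |He b (ρ*x+β*y)|
        ≤ (Ca * (1+|x|)^a) * (Cb * ((1+|x|)^b * (1+|y|)^b)) := by
          apply mul_le_mul (hba x) (hbb ρ β hρ hβ x y) (abs_nonneg _) (by positivity)
      _ = (Ca * (Cb * (1+|y|)^b)) * (1+|x|)^(a+b) := by rw [pow_add]; ring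
  constructor
  · exact integrable_gauss hcont.aestronglyMeasurable hbd
  · apply integrable_gauss (Continuous.aestronglyMeasurable (by continuity))
      (C := Ca * (Cb * (1+|y|)^b)) (n := a+b+1)
    intro x
    rw [abs_mul]
    calc |x| * |He a x * He b (ρ*x+β*y)|
        ≤ (1+|x|) * ((Ca * (Cb * (1+|y|)^b)) * (1+|x|)^(a+b)) :=
          mul_le_mul (by linarith [abs_nonneg x]) (hbd x) (abs_nonneg _)
            (by positivity)
      _ = (Ca * (Cb * (1+|y|)^b)) * (1+|x|)^(a+b+1) := by ring

/-- Inner (`x`-variable) recursion via Stein's lemma. -/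
lemma inner_rec (p q : ℕ) {ρ β : ℝ} (hρ : |ρ| ≤ 1) (hβ : |β| ≤ 1) (y : ℝ) :
    ∫ x, He (p+1) x * He q (ρ*x+β*y) ∂(gaussianReal 0 1)
      = ρ * (q:ℝ) * ∫ x, He p x * He (q-1) (ρ*x+β*y) ∂(gaussianReal 0 1) := by
  set gm := gaussianReal 0 1
  have key : ∫ x, x * (He p x * He q (ρ*x+β*y)) ∂gm
      = ∫ x, ((p:ℝ) * He (p-1) x * He q (ρ*x+β*y)
          + He p x * ((q:ℝ) * He (q-1) (ρ*x+β*y) * ρ)) ∂gm := by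
    apply stein'
    · intro x
      exact (he_hasDerivAt p x).mul (he_comp_hasDerivAt_x q ρ β y x)
    · exact (integrable_he_he p q hρ hβ y).2
    · exact (integrable_he_he p q hρ hβ y).1
    · apply Integrable.add
      · apply (((integrable_he_he (p-1) q hρ hβ y).1).const_mul ((p:ℝ))).congr
        filter_upwards with x; ring
      · apply (((integrable_he_he p (q-1) hρ hβ y).1).const_mul ((q:ℝ) * ρ)).congr
        filter_upwards with x; ring
  have hsplit : ∫ x, ((p:ℝ) * He (p-1) x * He q (ρ*x+β*y)
          + He p x * ((q:ℝ) * He (q-1) (ρ*x+β*y) * ρ)) ∂gm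
      = (p:ℝ) * ∫ x, He (p-1) x * He q (ρ*x+β*y) ∂gm
        + ρ * (q:ℝ) * ∫ x, He p x * He (q-1) (ρ*x+β*y) ∂gm := by
    rw [integral_add, ← integral_const_mul, ← integral_const_mul]
    · congr 1
      · congr 1; funext x; ring
      · congr 1; funext x; ring
    · apply (((integrable_he_he (p-1) q hρ hβ y).1).const_mul ((p:ℝ))).congr
      filter_upwards with x; ring
    · apply (((integrable_he_he p (q-1) hρ hβ y).1).const_mul ((q:ℝ) * ρ)).congr
      filter_upwards with x; ring
  have hexp : ∀ x : ℝ, He (p+1) x * He q (ρ*x+β*y)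
      = x * (He p x * He q (ρ*x+β*y)) - (p:ℝ) * (He (p-1) x * He q (ρ*x+β*y)) := by
    intro x
    rw [he_succ p x]; ring
  calc ∫ x, He (p+1) x * He q (ρ*x+β*y) ∂gm
      = ∫ x, (x * (He p x * He q (ρ*x+β*y))
          - (p:ℝ) * (He (p-1) x * He q (ρ*x+β*y))) ∂gm := by
        congr 1; funext x; exact hexp x
    _ = (∫ x, x * (He p x * He q (ρ*x+β*y)) ∂gm)
        - (p:ℝ) * ∫ x, He (p-1) x * He q (ρ*x+β*y) ∂gm := by
        rw [integral_sub ((integrable_he_he p q hρ hβ y).2)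
          (((integrable_he_he (p-1) q hρ hβ y).1).const_mul ((p:ℝ))),
          integral_const_mul]
    _ = ρ * (q:ℝ) * ∫ x, He p x * He (q-1) (ρ*x+β*y) ∂gm := by
        rw [key, hsplit]; ring

lemma gauss_mean : ∫ x, x ∂(gaussianReal 0 1) = 0 := by
  have h := stein' (f := fun _ => (1:ℝ)) (f' := fun _ => (0:ℝ))
    (fun x => hasDerivAt_const x 1)
    (by
      apply integrable_gauss (Continuous.aestronglyMeasurable (by continuity))
        (C := 1) (n := 1)
      intro x
      rw [mul_one, one_mul, pow_one]
      linarith [abs_nonneg x])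
    (integrable_const 1) (integrable_const 0)
  simpa using h

section Prod

variable {ρ β : ℝ}

lemma integrable_prod_bound {F : ℝ × ℝ → ℝ}
    (hm : AEStronglyMeasurable F ((gaussianReal 0 1).prod (gaussianReal 0 1)))
    {C : ℝ} {n : ℕ} (hb : ∀ x y : ℝ, |F (x, y)| ≤ C * ((1+|x|)^n * (1+|y|)^n)) :
    Integrable F ((gaussianReal 0 1).prod (gaussianReal 0 1)) := by
  have hC : 0 ≤ C := by
    have := (abs_nonneg (F (0,0))).trans (hb 0 0)
    simpa using this
  have h1 : Integrable (fun x : ℝ => C * (1+|x|)^n) (gaussianReal 0 1) := by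
    apply integrable_gauss (Continuous.aestronglyMeasurable (by continuity)) (C := C) (n := n)
    intro x
    rw [abs_of_nonneg (by positivity)]
  have h2 : Integrable (fun y : ℝ => (1+|y|)^n) (gaussianReal 0 1) := by
    apply integrable_gauss (Continuous.aestronglyMeasurable (by continuity)) (C := 1) (n := n)
    intro y
    rw [abs_of_nonneg (by positivity), one_mul]
  apply (h1.mul_prod h2).mono' hm
  refine Filter.Eventually.of_forall fun z => ?_
  rw [Real.norm_eq_abs]
  calc |F z| = |F (z.1, z.2)| := rfl
    _ ≤ C * ((1+|z.1|)^n * (1+|z.2|)^n) := hb z.1 z.2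
    _ = C * (1+|z.1|)^n * (1+|z.2|)^n := by ring

lemma continuous_w : Continuous (fun z : ℝ × ℝ => ρ*z.1+β*z.2) :=
  ((continuous_const.mul continuous_fst).add (continuous_const.mul continuous_snd))

lemma prod_bound_he (a b : ℕ) (hρ : |ρ| ≤ 1) (hβ : |β| ≤ 1) :
    ∃ C : ℝ, 0 < C ∧ ∀ x y : ℝ, |He a x * He b (ρ*x+β*y)|
      ≤ C * ((1+|x|)^(a+b) * (1+|y|)^(a+b)) := by
  obtain ⟨Ca, hCa, hba⟩ := he_bound a
  obtain ⟨Cb, hCb, hbb⟩ := he_comp_bound b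
  refine ⟨Ca * Cb, by positivity, fun x y => ?_⟩
  have h1x : (1:ℝ) ≤ 1 + |x| := by linarith [abs_nonneg x]
  have h1y : (1:ℝ) ≤ 1 + |y| := by linarith [abs_nonneg y]
  rw [abs_mul]
  calc |He a x| * |He b (ρ*x+β*y)|
      ≤ (Ca * (1+|x|)^a) * (Cb * ((1+|x|)^b * (1+|y|)^b)) :=
        mul_le_mul (hba x) (hbb ρ β hρ hβ x y) (abs_nonneg _) (by positivity)
    _ = (Ca * Cb) * ((1+|x|)^(a+b) * (1+|y|)^b) := by rw [pow_add]; ring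
    _ ≤ (Ca * Cb) * ((1+|x|)^(a+b) * (1+|y|)^(a+b)) := by
        gcongr
        · omega

lemma integrable_prod_he (a b : ℕ) (hρ : |ρ| ≤ 1) (hβ : |β| ≤ 1) :
    Integrable (fun z : ℝ × ℝ => He a z.1 * He b (ρ*z.1+β*z.2))
      ((gaussianReal 0 1).prod (gaussianReal 0 1)) := by
  obtain ⟨C, hC, hb⟩ := prod_bound_he a b hρ hβ
  exact integrable_prod_bound
    (Continuous.aestronglyMeasurable
      (((he_continuous a).comp continuous_fst).mul ((he_continuous b).comp continuous_w)))
    (fun x y => hb x y)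

lemma integrable_prod_he_fst (a b : ℕ) (hρ : |ρ| ≤ 1) (hβ : |β| ≤ 1) :
    Integrable (fun z : ℝ × ℝ => z.1 * (He a z.1 * He b (ρ*z.1+β*z.2)))
      ((gaussianReal 0 1).prod (gaussianReal 0 1)) := by
  obtain ⟨C, hC, hb⟩ := prod_bound_he a b hρ hβ
  apply integrable_prod_bound (C := C) (n := a+b+1)
    (Continuous.aestronglyMeasurable
      (continuous_fst.mul
        (((he_continuous a).comp continuous_fst).mul ((he_continuous b).comp continuous_w))))
  intro x y
  have h1x : (1:ℝ) ≤ 1 + |x| := by linarith [abs_nonneg x]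
  have h1y : (1:ℝ) ≤ 1 + |y| := by linarith [abs_nonneg y]
  show |x * (He a x * He b (ρ*x+β*y))| ≤ _
  rw [abs_mul]
  calc |x| * |He a x * He b (ρ*x+β*y)|
      ≤ (1+|x|) * (C * ((1+|x|)^(a+b) * (1+|y|)^(a+b))) :=
        mul_le_mul (by linarith [abs_nonneg x]) (hb x y) (abs_nonneg _) (by positivity)
    _ = C * ((1+|x|)^(a+b+1) * (1+|y|)^(a+b)) := by ring
    _ ≤ C * ((1+|x|)^(a+b+1) * (1+|y|)^(a+b+1)) := by
        apply mul_le_mul_of_nonneg_left _ hC.le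
        apply mul_le_mul_of_nonneg_left _ (by positivity)
        exact pow_le_pow_right₀ h1y (by omega)

lemma integrable_prod_he_snd (a b : ℕ) (hρ : |ρ| ≤ 1) (hβ : |β| ≤ 1) :
    Integrable (fun z : ℝ × ℝ => z.2 * (He a z.1 * He b (ρ*z.1+β*z.2)))
      ((gaussianReal 0 1).prod (gaussianReal 0 1)) := by
  obtain ⟨C, hC, hb⟩ := prod_bound_he a b hρ hβ
  apply integrable_prod_bound (C := C) (n := a+b+1)
    (Continuous.aestronglyMeasurable
      (continuous_snd.mul
        (((he_continuous a).comp continuous_fst).mul ((he_continuous b).comp continuous_w))))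
  intro x y
  have h1x : (1:ℝ) ≤ 1 + |x| := by linarith [abs_nonneg x]
  have h1y : (1:ℝ) ≤ 1 + |y| := by linarith [abs_nonneg y]
  show |y * (He a x * He b (ρ*x+β*y))| ≤ _
  rw [abs_mul]
  calc |y| * |He a x * He b (ρ*x+β*y)|
      ≤ (1+|y|) * (C * ((1+|x|)^(a+b) * (1+|y|)^(a+b))) :=
        mul_le_mul (by linarith [abs_nonneg y]) (hb x y) (abs_nonneg _) (by positivity)
    _ = C * ((1+|x|)^(a+b) * (1+|y|)^(a+b+1)) := by ring
    _ ≤ C * ((1+|x|)^(a+b+1) * (1+|y|)^(a+b+1)) := by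
        apply mul_le_mul_of_nonneg_left _ hC.le
        apply mul_le_mul_of_nonneg_right _ (by positivity)
        exact pow_le_pow_right₀ h1x (by omega)

end Prod

section Main

variable {ρ β : ℝ}

lemma he0_eq (x : ℝ) : He 0 x = 1 := rfl
lemma he1_eq (x : ℝ) : He 1 x = x := rfl

/-- Integral of `He q (ρ X + β Y)` for independent standard Gaussians, when `ρ² + β² = 1`. -/
lemma base_I0 (hρβ : ρ^2 + β^2 = 1) (hρ : |ρ| ≤ 1) (hβ : |β| ≤ 1) :
    ∀ q : ℕ, ∫ z : ℝ × ℝ, He q (ρ*z.1+β*z.2)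
        ∂((gaussianReal 0 1).prod (gaussianReal 0 1)) = if q = 0 then 1 else 0 := by
  set gm := gaussianReal 0 1 with hgm
  have hint : ∀ b : ℕ, Integrable (fun z : ℝ × ℝ => He b (ρ*z.1+β*z.2)) (gm.prod gm) := by
    intro b
    apply (integrable_prod_he 0 b hρ hβ).congr
    filter_upwards with z
    rw [he0_eq, one_mul]
  have hint1 : ∀ b : ℕ, Integrable (fun z : ℝ × ℝ => z.1 * He b (ρ*z.1+β*z.2)) (gm.prod gm) := by
    intro b
    apply (integrable_prod_he_fst 0 b hρ hβ).congr
    filter_upwards with z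
    rw [he0_eq, one_mul]
  have hint2 : ∀ b : ℕ, Integrable (fun z : ℝ × ℝ => z.2 * He b (ρ*z.1+β*z.2)) (gm.prod gm) := by
    intro b
    apply (integrable_prod_he_snd 0 b hρ hβ).congr
    filter_upwards with z
    rw [he0_eq, one_mul]
  -- inner integrability lemmas, for fixed y (in x) and fixed x (in y)
  have hx_int : ∀ (b : ℕ) (y : ℝ), Integrable (fun x => He b (ρ*x+β*y)) gm := by
    intro b y
    apply ((integrable_he_he 0 b hρ hβ y).1).congr
    filter_upwards with x
    rw [he0_eq, one_mul]
  have hx_int_mul : ∀ (b : ℕ) (y : ℝ), Integrable (fun x => x * He b (ρ*x+β*y)) gm := by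
    intro b y
    apply ((integrable_he_he 0 b hρ hβ y).2).congr
    filter_upwards with x
    rw [he0_eq, one_mul]
  have hy_int : ∀ (b : ℕ) (x : ℝ), Integrable (fun y => He b (ρ*x+β*y)) gm := by
    intro b x
    apply ((integrable_he_he 0 b hβ hρ x).1).congr
    filter_upwards with t
    rw [he0_eq, one_mul, show β*t+ρ*x = ρ*x+β*t from by ring]
  have hy_int_mul : ∀ (b : ℕ) (x : ℝ), Integrable (fun y => y * He b (ρ*x+β*y)) gm := by
    intro b x
    apply ((integrable_he_he 0 b hβ hρ x).2).congr
    filter_upwards with t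
    rw [he0_eq, one_mul, show β*t+ρ*x = ρ*x+β*t from by ring]
  -- Stein in x (fixed y): ∫ x * He (b+1) (w) = ρ(b+1) ∫ He b (w)
  have steinx : ∀ (b : ℕ) (y : ℝ),
      ∫ x, x * He (b+1) (ρ*x+β*y) ∂gm = ρ * (b+1 : ℝ) * ∫ x, He b (ρ*x+β*y) ∂gm := by
    intro b y
    have h := stein' (f := fun x => He (b+1) (ρ*x+β*y))
      (f' := fun x => ((b+1 : ℕ):ℝ) * He b (ρ*x+β*y) * ρ)
      (fun x => by simpa using he_comp_hasDerivAt_x (b+1) ρ β y x)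
      (hx_int_mul (b+1) y) (hx_int (b+1) y)
      (by
        apply ((hx_int b y).const_mul (((b+1:ℕ):ℝ) * ρ)).congr
        filter_upwards with x; ring)
    rw [h, ← integral_const_mul]
    congr 1; funext x; push_cast; ring
  have steiny : ∀ (b : ℕ) (x : ℝ),
      ∫ y, y * He (b+1) (ρ*x+β*y) ∂gm = β * (b+1 : ℝ) * ∫ y, He b (ρ*x+β*y) ∂gm := by
    intro b x
    have h := stein' (f := fun y => He (b+1) (ρ*x+β*y))
      (f' := fun y => ((b+1 : ℕ):ℝ) * He b (ρ*x+β*y) * β)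
      (fun y => by simpa using he_comp_hasDerivAt_y (b+1) ρ β x y)
      (hy_int_mul (b+1) x) (hy_int (b+1) x)
      (by
        apply ((hy_int b x).const_mul (((b+1:ℕ):ℝ) * β)).congr
        filter_upwards with y; ring)
    rw [h, ← integral_const_mul]
    congr 1; funext y; push_cast; ring
  -- the two double-integral Stein identities
  have dblx : ∀ b : ℕ, ∫ z : ℝ × ℝ, z.1 * He (b+1) (ρ*z.1+β*z.2) ∂(gm.prod gm)
      = ρ * (b+1:ℝ) * ∫ z : ℝ × ℝ, He b (ρ*z.1+β*z.2) ∂(gm.prod gm) := by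
    intro b
    rw [integral_prod_symm _ (hint1 (b+1)), integral_prod_symm _ (hint b)]
    rw [← integral_const_mul]
    congr 1; funext y
    exact steinx b y
  have dbly : ∀ b : ℕ, ∫ z : ℝ × ℝ, z.2 * He (b+1) (ρ*z.1+β*z.2) ∂(gm.prod gm)
      = β * (b+1:ℝ) * ∫ z : ℝ × ℝ, He b (ρ*z.1+β*z.2) ∂(gm.prod gm) := by
    intro b
    rw [integral_prod _ (hint2 (b+1)), integral_prod _ (hint b)]
    rw [← integral_const_mul]
    congr 1; funext x
    exact steiny b x
  -- main strong induction
  intro q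
  induction q using Nat.strong_induction_on with
  | _ q ih =>
    match q with
    | 0 => simp [he0_eq]
    | 1 =>
      have h := dblx 0
      have h' := dbly 0
      have hsplit : ∫ z : ℝ × ℝ, He 1 (ρ*z.1+β*z.2) ∂(gm.prod gm)
          = ρ * ∫ z : ℝ × ℝ, z.1 * He 0 (ρ*z.1+β*z.2) ∂(gm.prod gm)
            + β * ∫ z : ℝ × ℝ, z.2 * He 0 (ρ*z.1+β*z.2) ∂(gm.prod gm) := by
        rw [← integral_const_mul, ← integral_const_mul,
          ← integral_add ((hint1 0).const_mul ρ) ((hint2 0).const_mul β)]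
        congr 1; funext z
        rw [he1_eq, he0_eq]; ring
      have e0 : ∫ z : ℝ × ℝ, He 0 (ρ*z.1+β*z.2) ∂(gm.prod gm) = 1 := by simp [he0_eq]
      have ex : ∫ z : ℝ × ℝ, z.1 * He 0 (ρ*z.1+β*z.2) ∂(gm.prod gm) = 0 := by
        rw [integral_prod_symm _ (hint1 0)]
        have : ∀ y : ℝ, ∫ x, x * He 0 (ρ*x+β*y) ∂gm = 0 := by
          intro y
          have : (fun x : ℝ => x * He 0 (ρ*x+β*y)) = fun x : ℝ => x := by
            funext x; rw [he0_eq, mul_one]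
          rw [this, hgm, gauss_mean]
        simp only [this, integral_zero]
      have ey : ∫ z : ℝ × ℝ, z.2 * He 0 (ρ*z.1+β*z.2) ∂(gm.prod gm) = 0 := by
        rw [integral_prod _ (hint2 0)]
        have : ∀ x : ℝ, ∫ y, y * He 0 (ρ*x+β*y) ∂gm = 0 := by
          intro x
          have : (fun y : ℝ => y * He 0 (ρ*x+β*y)) = fun y : ℝ => y := by
            funext y; rw [he0_eq, mul_one]
          rw [this, hgm, gauss_mean]
        simp only [this, integral_zero]
      rw [hsplit, ex, ey]
      norm_num
    | (b + 2) =>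
      have hrec : ∫ z : ℝ × ℝ, He (b+2) (ρ*z.1+β*z.2) ∂(gm.prod gm)
          = ρ * ∫ z : ℝ × ℝ, z.1 * He (b+1) (ρ*z.1+β*z.2) ∂(gm.prod gm)
            + β * ∫ z : ℝ × ℝ, z.2 * He (b+1) (ρ*z.1+β*z.2) ∂(gm.prod gm)
            - (b+1 : ℝ) * ∫ z : ℝ × ℝ, He b (ρ*z.1+β*z.2) ∂(gm.prod gm) := by
        have hpt : (fun z : ℝ × ℝ => He (b+2) (ρ*z.1+β*z.2))
            = fun z : ℝ × ℝ => (ρ * (z.1 * He (b+1) (ρ*z.1+β*z.2))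
                + β * (z.2 * He (b+1) (ρ*z.1+β*z.2)))
                - ((b:ℝ)+1) * He b (ρ*z.1+β*z.2) := by
          funext z
          have he2 : He (b+2) (ρ*z.1+β*z.2) = (ρ*z.1+β*z.2) * He (b+1) (ρ*z.1+β*z.2)
              - ((b:ℝ)+1) * He b (ρ*z.1+β*z.2) := by simp [He]
          rw [he2]; ring
        have haddInt : Integrable (fun z : ℝ × ℝ =>
            ρ * (z.1 * He (b+1) (ρ*z.1+β*z.2)) + β * (z.2 * He (b+1) (ρ*z.1+β*z.2)))
            (gm.prod gm) := by
          exact ((hint1 (b+1)).const_mul ρ).add ((hint2 (b+1)).const_mul β)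
        rw [hpt, integral_sub haddInt ((hint b).const_mul ((b:ℝ)+1)),
          integral_add ((hint1 (b+1)).const_mul ρ) ((hint2 (b+1)).const_mul β),
          integral_const_mul, integral_const_mul, integral_const_mul]
      rw [hrec, dblx b, dbly b, ih b (by omega), if_neg (by omega : ¬ (b+2 = 0))]
      by_cases hb : b = 0
      · subst hb
        rw [if_pos rfl]
        push_cast
        nlinarith [hρβ]
      · rw [if_neg hb]; ring

/-- The main double-integral formula. -/
lemma I_formula (hρβ : ρ^2 + β^2 = 1) (hρ : |ρ| ≤ 1) (hβ : |β| ≤ 1) :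
    ∀ p q : ℕ, ∫ z : ℝ × ℝ, He p z.1 * He q (ρ*z.1+β*z.2)
        ∂((gaussianReal 0 1).prod (gaussianReal 0 1))
      = if p = q then (Nat.factorial q : ℝ) * ρ ^ q else 0 := by
  set gm := gaussianReal 0 1 with hgm
  intro p
  induction p with
  | zero =>
    intro q
    have h := base_I0 hρβ hρ hβ q
    have : (fun z : ℝ × ℝ => He 0 z.1 * He q (ρ*z.1+β*z.2))
        = fun z : ℝ × ℝ => He q (ρ*z.1+β*z.2) := by
      funext z; rw [he0_eq, one_mul]
    rw [this, h]
    rcases eq_or_ne q 0 with h0 | h0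
    · subst h0; simp
    · rw [if_neg h0, if_neg (by omega : ¬ (0 = q))]
  | succ p ih =>
    intro q
    have step : ∫ z : ℝ × ℝ, He (p+1) z.1 * He q (ρ*z.1+β*z.2) ∂(gm.prod gm)
        = ρ * (q:ℝ) * ∫ z : ℝ × ℝ, He p z.1 * He (q-1) (ρ*z.1+β*z.2) ∂(gm.prod gm) := by
      rw [integral_prod_symm _ (integrable_prod_he (p+1) q hρ hβ),
        integral_prod_symm _ (integrable_prod_he p (q-1) hρ hβ), ← integral_const_mul]
      congr 1; funext y
      exact inner_rec p q hρ hβ y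
    rw [step]
    match q with
    | 0 =>
      simp
    | (q' + 1) =>
      have : (q' + 1 - 1 : ℕ) = q' := rfl
      rw [this, ih q']
      rcases eq_or_ne p q' with hpq | hpq
      · subst hpq
        rw [if_pos rfl, if_pos rfl]
        rw [Nat.factorial_succ]
        push_cast
        ring
      · rw [if_neg hpq, if_neg (by omega : ¬ (p + 1 = q' + 1))]
        ring

end Main

/-- If `Z₁, Z₂` are independent standard Gaussians, `ρ ∈ [-1,1]` and
`Y = ρ Z₁ + √(1-ρ²) Z₂`, then `E[He_p(Z₁)·He_q(Y)] = q!·ρ^q` if `p = q`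
and `= 0` otherwise. -/
theorem stmt1
    {Ω : Type*} [MeasurableSpace Ω] (P : Measure Ω) [IsProbabilityMeasure P]
    (Z₁ Z₂ : Ω → ℝ) (hZ₁m : Measurable Z₁) (hZ₂m : Measurable Z₂)
    (hZ₁ : P.map Z₁ = gaussianReal 0 1) (hZ₂ : P.map Z₂ = gaussianReal 0 1)
    (hindep : IndepFun Z₁ Z₂ P)
    (ρ : ℝ) (hρ : ρ ∈ Icc (-1 : ℝ) 1)
    (Y : Ω → ℝ) (hY : Y = fun ω => ρ * Z₁ ω + Real.sqrt (1 - ρ ^ 2) * Z₂ ω) :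
    ∀ p q : ℕ, ∫ ω, He p (Z₁ ω) * He q (Y ω) ∂P
      = if p = q then (Nat.factorial q : ℝ) * ρ ^ q else 0 := by
  intro p q
  rw [hY]
  set β := Real.sqrt (1 - ρ ^ 2) with hβdef
  obtain ⟨hρl, hρr⟩ := hρ
  have hρ2 : ρ^2 ≤ 1 := by nlinarith
  have hβ2 : β^2 = 1 - ρ^2 := Real.sq_sqrt (by linarith)
  have hρβ : ρ^2 + β^2 = 1 := by rw [hβ2]; ring
  have habs : |ρ| ≤ 1 := abs_le.mpr ⟨hρl, hρr⟩
  have hβabs : |β| ≤ 1 := by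
    rw [abs_of_nonneg (Real.sqrt_nonneg _)]
    have h1 := Real.sqrt_le_sqrt (show (1 - ρ^2 : ℝ) ≤ 1 by nlinarith)
    rwa [Real.sqrt_one] at h1
  have hmap : P.map (fun ω => (Z₁ ω, Z₂ ω)) = (gaussianReal 0 1).prod (gaussianReal 0 1) := by
    rw [(indepFun_iff_map_prod_eq_prod_map_map hZ₁m.aemeasurable hZ₂m.aemeasurable).mp hindep,
      hZ₁, hZ₂]
  have hF : Continuous (fun z : ℝ × ℝ => He p z.1 * He q (ρ*z.1+β*z.2)) :=
    ((he_continuous p).comp continuous_fst).mul ((he_continuous q).comp continuous_w)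
  have h := I_formula hρβ habs hβabs p q
  rw [← h, ← hmap, integral_map (hZ₁m.prodMk hZ₂m).aemeasurable hF.aestronglyMeasurable]
end

section
/- Let α > 0 and κ > 0, let (V_q)_{q≥1} be real numbers with Σ_{q=1}^∞ V_q²/q! < ∞, and let R : ℝ → [−1,1] satisfy lim_{|x|→∞} |x|^α·R(x) = κ. Define S(x) := Σ_{q=1}^∞ (V_q²/q!)·R(x)^q. Then lim_{|x|→∞} |x|^α·S(x) = V_1²·κ. -/
open MeasureTheory Filter Set
open scoped Topology

/-- Asymptotics of the covariance of a transformed long-range dependent field: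
if `Σ_{q≥1} V_q²/q! < ∞`, `R` takes values in `[-1,1]` with
`|x|^α · R(x) → κ` as `|x| → ∞`, and `S(x) = Σ_{q≥1} (V_q²/q!)·R(x)^q`, then
`|x|^α · S(x) → V_1² · κ` as `|x| → ∞`. -/
theorem stmt2 (α κ : ℝ) (hα : 0 < α) (hκ : 0 < κ)
    (V : ℕ → ℝ)
    (hVsum : Summable (fun q : ℕ => V (q + 1) ^ 2 / (Nat.factorial (q + 1) : ℝ)))
    (R : ℝ → ℝ) (hR : ∀ x, R x ∈ Icc (-1 : ℝ) 1)
    (hRlim : Tendsto (fun x => |x| ^ α * R x) (cocompact ℝ) (𝓝 κ))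
    (S : ℝ → ℝ)
    (hS : ∀ x, S x = ∑' q : ℕ, V (q + 1) ^ 2 / (Nat.factorial (q + 1) : ℝ) * R x ^ (q + 1)) :
    Tendsto (fun x => |x| ^ α * S x) (cocompact ℝ) (𝓝 (V 1 ^ 2 * κ)) := by
  set c : ℕ → ℝ := fun q => V (q + 1) ^ 2 / (Nat.factorial (q + 1) : ℝ) with hc_def
  have hc_nonneg : ∀ q, 0 ≤ c q := fun q =>
    div_nonneg (sq_nonneg _) (Nat.cast_nonneg _)
  have hc_shift : Summable (fun q => c (q + 1)) := (summable_nat_add_iff 1).2 hVsum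
  have hRabs : ∀ x, |R x| ≤ 1 := fun x => abs_le.2 ⟨(hR x).1, (hR x).2⟩
  have habs : Tendsto (fun x : ℝ => |x|) (cocompact ℝ) atTop := by
    exact tendsto_norm_cocompact_atTop (E := ℝ)
  have hpow : Tendsto (fun x : ℝ => |x| ^ α) (cocompact ℝ) atTop :=
    (tendsto_rpow_atTop hα).comp habs
  have hR0 : Tendsto R (cocompact ℝ) (𝓝 0) := by
    have h1 : Tendsto (fun x => (|x| ^ α * R x) * (|x| ^ α)⁻¹) (cocompact ℝ) (𝓝 (κ * 0)) :=
      hRlim.mul (tendsto_inv_atTop_zero.comp hpow)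
    rw [mul_zero] at h1
    refine h1.congr' ?_
    filter_upwards [hpow.eventually_gt_atTop 0] with x hx
    field_simp
  set T : ℝ → ℝ := fun x => ∑' q, c (q + 1) * R x ^ (q + 1) with hT_def
  have hT0 : Tendsto T (cocompact ℝ) (𝓝 0) := by
    have hB : Tendsto (fun x => (∑' q, c (q + 1)) * |R x|) (cocompact ℝ) (𝓝 0) := by
      have := (hR0.abs).const_mul (∑' q, c (q + 1))
      simpa using this
    refine squeeze_zero_norm (fun x => ?_) hB
    have hsum : HasSum (fun q => c (q + 1) * |R x|) ((∑' q, c (q + 1)) * |R x|) :=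
      hc_shift.hasSum.mul_right _
    refine tsum_of_norm_bounded hsum (fun q => ?_)
    rw [norm_mul, Real.norm_eq_abs, Real.norm_eq_abs, abs_of_nonneg (hc_nonneg _), abs_pow]
    refine mul_le_mul_of_nonneg_left ?_ (hc_nonneg _)
    calc |R x| ^ (q + 1) ≤ |R x| ^ 1 :=
          pow_le_pow_of_le_one (abs_nonneg _) (hRabs x) (by omega)
    _ = |R x| := pow_one _
  have hSsum : ∀ x, Summable (fun q => c q * R x ^ (q + 1)) := fun x => by
    refine Summable.of_norm_bounded hVsum (fun q => ?_)
    rw [norm_mul, Real.norm_eq_abs, Real.norm_eq_abs, abs_of_nonneg (hc_nonneg _), abs_pow]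
    calc c q * |R x| ^ (q + 1) ≤ c q * 1 :=
          mul_le_mul_of_nonneg_left (pow_le_one₀ (abs_nonneg _) (hRabs x)) (hc_nonneg _)
    _ = c q := mul_one _
  have hSeq : ∀ x, S x = c 0 * R x + T x * R x := by
    intro x
    rw [hS x, Summable.tsum_eq_zero_add (hSsum x)]
    congr 1
    · ring
    · rw [hT_def, ← tsum_mul_right]
      congr 1; ext q; ring
  have hmain : Tendsto (fun x => c 0 * (|x| ^ α * R x) + (|x| ^ α * R x) * T x)
      (cocompact ℝ) (𝓝 (c 0 * κ + κ * 0)) :=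
    (hRlim.const_mul _).add (hRlim.mul hT0)
  have hval : c 0 * κ + κ * 0 = V 1 ^ 2 * κ := by simp [hc_def, Nat.factorial]
  rw [hval] at hmain
  refine hmain.congr (fun x => ?_)
  rw [hSeq x]; ring
end

section
/- Let β, γ ∈ (0,1] with β + γ > 1, and let f be β-Hölder and g be γ-Hölder on a compact interval [a,b]. Then there exists a real number I (the Young integral ∫_a^b f dg) such that for every sequence of partitions a = t_0 < t_1 < ⋯ < t_n = b with mesh max_i (t_{i+1} − t_i) → 0, the left-endpoint Riemann sums Σ_{i=0}^{n−1} f(t_i)(g(t_{i+1}) − g(t_i)) converge to I. Moreover there is a constant C_{β,γ} depending only on β and γ such that |I − f(a)(g(b) − g(a))| ≤ C_{β,γ}·[f]_β·[g]_γ·(b−a)^{β+γ}. -/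
open MeasureTheory Filter Set
open scoped Topology

/-- `t 0 = a < t 1 < ⋯ < t n = b` is a partition of `[a,b]`. -/
def IsPartition (a b : ℝ) (t : ℕ → ℝ) (n : ℕ) : Prop :=
  t 0 = a ∧ t n = b ∧ ∀ i < n, t i < t (i + 1)

/-- Left-endpoint Riemann sum of `f` against `g` along the partition `t`. -/
noncomputable def riemannSum (f g : ℝ → ℝ) (t : ℕ → ℝ) (n : ℕ) : ℝ :=
  ∑ i ∈ Finset.range n, f (t i) * (g (t (i + 1)) - g (t i))

/-- `I` is the Young integral `∫_a^b f dg`: for every sequence of partitions of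
`[a,b]` with mesh tending to `0`, the left-endpoint Riemann sums tend to `I`. -/
def IsYoungIntegral (a b : ℝ) (f g : ℝ → ℝ) (I : ℝ) : Prop :=
  ∀ (t : ℕ → ℕ → ℝ) (n : ℕ → ℕ),
    (∀ k, IsPartition a b (t k) (n k)) →
    (∀ δ > (0 : ℝ), ∃ K : ℕ, ∀ k ≥ K, ∀ i < n k, t k (i + 1) - t k i ≤ δ) →
    Tendsto (fun k => riemannSum f g (t k) (n k)) atTop (𝓝 I)

lemma part_lt {t : ℕ → ℝ} {n : ℕ} (h : ∀ i < n, t i < t (i + 1)) :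
    ∀ {i j : ℕ}, i < j → j ≤ n → t i < t j := by
  intro i j hij hjn
  induction j with
  | zero => omega
  | succ j IH =>
    rcases Nat.lt_or_ge i j with h' | h'
    · exact (IH h' (by omega)).trans (h j (by omega))
    · have : i = j := by omega
      subst this; exact h i (by omega)

lemma part_le {t : ℕ → ℝ} {n : ℕ} (h : ∀ i < n, t i < t (i + 1)) :
    ∀ {i j : ℕ}, i ≤ j → j ≤ n → t i ≤ t j := by
  intro i j hij hjn
  rcases Nat.lt_or_ge i j with h' | h'
  · exact (part_lt h h' hjn).le
  · have : i = j := by omega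
    subst this; exact le_rfl

/-- telescoping of the "double gap" sum -/
lemma tele_sum (t : ℕ → ℝ) : ∀ k : ℕ,
    ∑ j ∈ Finset.Icc 1 k, (t (j + 1) - t (j - 1)) = t (k + 1) + t k - t 1 - t 0 := by
  intro k
  induction k with
  | zero => simp
  | succ k IH =>
    rw [Finset.sum_Icc_succ_top (by omega)]
    rw [IH]
    simp only [Nat.add_sub_cancel]
    ring

theorem youngA (β γ : ℝ) (hβ0 : 0 < β) (hγ0 : 0 < γ)
    (f g : ℝ → ℝ) (Kf Kg : ℝ) (hKf : 0 ≤ Kf) (hKg : 0 ≤ Kg)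
    (a b : ℝ)
    (hf : ∀ x ∈ Set.Icc a b, ∀ y ∈ Set.Icc a b, |f x - f y| ≤ Kf * |x - y| ^ β)
    (hg : ∀ x ∈ Set.Icc a b, ∀ y ∈ Set.Icc a b, |g x - g y| ≤ Kg * |x - y| ^ γ) :
    ∀ (n : ℕ) (t : ℕ → ℝ), (∀ i < n + 1, t i < t (i + 1)) →
      (∀ i ≤ n + 1, t i ∈ Set.Icc a b) →
      |riemannSum f g t (n + 1) - f (t 0) * (g (t (n + 1)) - g (t 0))| ≤
        Kf * Kg * (2 * (t (n + 1) - t 0)) ^ (β + γ) *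
          ∑ m ∈ Finset.range n, ((1 : ℝ) / (m + 1)) ^ (β + γ) := by
  intro n
  induction n with
  | zero =>
    intro t _ _
    simp [riemannSum]
  | succ n IH =>
    intro t hmono hmem
    -- choose a minimizing interior point
    obtain ⟨i, hi, hmin⟩ := Finset.exists_min_image (Finset.Icc 1 (n + 1))
      (fun j => t (j + 1) - t (j - 1)) ⟨1, by simp⟩
    simp only [Finset.mem_Icc] at hi
    obtain ⟨m, rfl⟩ : ∃ m, i = m + 1 := ⟨i - 1, by omega⟩
    have hm : m ≤ n := by omega
    simp only [Nat.add_sub_cancel] at hmin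
    -- the minimal double gap d
    set d : ℝ := t (m + 2) - t m with hd
    have hd0 : 0 < d := sub_pos.2 (part_lt hmono (by omega) (by omega))
    -- bound on d : (n+1) * d ≤ 2 * Δ
    set Δ : ℝ := t (n + 2) - t 0 with hΔ
    have hΔ0 : 0 < Δ := sub_pos.2 (part_lt hmono (by omega) (by omega))
    have hcard : (Finset.Icc 1 (n + 1)).card = n + 1 := by
      rw [Nat.card_Icc]; omega
    have hdsum : (n + 1 : ℝ) * d ≤ 2 * Δ := by
      have h1 : (n + 1 : ℝ) * d ≤ ∑ j ∈ Finset.Icc 1 (n + 1), (t (j + 1) - t (j - 1)) := by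
        have := Finset.card_nsmul_le_sum (Finset.Icc 1 (n + 1))
          (fun j => t (j + 1) - t (j - 1)) d (by
            intro j hj
            simp only [Finset.mem_Icc] at hj
            exact hmin j (by simp [Finset.mem_Icc]; omega))
        rw [hcard] at this
        simpa [nsmul_eq_mul] using this
      have h2 : ∑ j ∈ Finset.Icc 1 (n + 1), (t (j + 1) - t (j - 1)) ≤ 2 * Δ := by
        rw [tele_sum]
        have h3 : t 0 ≤ t 1 := (part_lt hmono (by omega) (by omega)).le
        have h4 : t (n + 1) ≤ t (n + 2) := (part_lt hmono (by omega) (by omega)).le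
        have e : n + 1 + 1 = n + 2 := rfl
        rw [e]
        simp only [hΔ]
        linarith
      linarith
    have hdle : d ≤ 2 * Δ / (n + 1) := by
      rw [le_div_iff₀ (by positivity : (0:ℝ) < (n:ℝ) + 1)]
      nlinarith [hdsum]
    -- the reduced partition t'
    set t' : ℕ → ℝ := fun j => if j < m + 1 then t j else t (j + 1) with ht'
    have ht'mono : ∀ j < n + 1, t' j < t' (j + 1) := by
      intro j hj
      simp only [ht']
      rcases Nat.lt_or_ge (j + 1) (m + 1) with h' | h'
      · rw [if_pos (by omega), if_pos h']
        exact hmono j (by omega)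
      · rcases Nat.lt_or_ge j (m + 1) with h'' | h''
        · rw [if_pos h'', if_neg (by omega)]
          have : j = m := by omega
          subst this
          exact part_lt hmono (by omega) (by omega)
        · rw [if_neg (by omega), if_neg (by omega)]
          exact hmono (j + 1) (by omega)
    have ht'mem : ∀ j ≤ n + 1, t' j ∈ Set.Icc a b := by
      intro j hj
      simp only [ht']
      split
      · exact hmem j (by omega)
      · exact hmem (j + 1) (by omega)
    have ht'0 : t' 0 = t 0 := by simp [ht']
    have ht'top : t' (n + 1) = t (n + 2) := by
      simp only [ht', if_neg (by omega : ¬ (n + 1 < m + 1))]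
    -- sum identity
    set E : ℝ := (f (t (m + 1)) - f (t m)) * (g (t (m + 2)) - g (t (m + 1))) with hE
    have hsum : riemannSum f g t (n + 2) = riemannSum f g t' (n + 1) + E := by
      simp only [riemannSum]
      have hsplit1 : ∑ j ∈ Finset.range (n + 2), f (t j) * (g (t (j + 1)) - g (t j)) =
          (∑ j ∈ Finset.range m, f (t j) * (g (t (j + 1)) - g (t j)))
          + f (t m) * (g (t (m + 1)) - g (t m))
          + f (t (m + 1)) * (g (t (m + 2)) - g (t (m + 1)))
          + ∑ j ∈ Finset.Ico (m + 2) (n + 2), f (t j) * (g (t (j + 1)) - g (t j)) := by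
        rw [Finset.range_eq_Ico, ← Finset.sum_Ico_consecutive _ (Nat.zero_le (m + 2)) (by omega : m + 2 ≤ n + 2)]
        rw [← Finset.range_eq_Ico, Finset.sum_range_succ, Finset.sum_range_succ]
      have hsplit2 : ∑ j ∈ Finset.range (n + 1), f (t' j) * (g (t' (j + 1)) - g (t' j)) =
          (∑ j ∈ Finset.range m, f (t' j) * (g (t' (j + 1)) - g (t' j)))
          + f (t' m) * (g (t' (m + 1)) - g (t' m))
          + ∑ j ∈ Finset.Ico (m + 1) (n + 1), f (t' j) * (g (t' (j + 1)) - g (t' j)) := by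
        rw [Finset.range_eq_Ico, ← Finset.sum_Ico_consecutive _ (Nat.zero_le (m + 1)) (by omega : m + 1 ≤ n + 1)]
        rw [← Finset.range_eq_Ico, Finset.sum_range_succ]
      have hc1 : ∑ j ∈ Finset.range m, f (t' j) * (g (t' (j + 1)) - g (t' j)) =
          ∑ j ∈ Finset.range m, f (t j) * (g (t (j + 1)) - g (t j)) := by
        apply Finset.sum_congr rfl
        intro j hj
        simp only [Finset.mem_range] at hj
        simp only [ht', if_pos (by omega : j < m + 1), if_pos (by omega : j + 1 < m + 1)]
      have hc2 : f (t' m) * (g (t' (m + 1)) - g (t' m)) = f (t m) * (g (t (m + 2)) - g (t m)) := by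
        simp only [ht', if_pos (by omega : m < m + 1), if_neg (by omega : ¬ (m + 1 < m + 1))]
      have hc3 : ∑ j ∈ Finset.Ico (m + 1) (n + 1), f (t' j) * (g (t' (j + 1)) - g (t' j)) =
          ∑ j ∈ Finset.Ico (m + 2) (n + 2), f (t j) * (g (t (j + 1)) - g (t j)) := by
        rw [Finset.sum_Ico_eq_sum_range, Finset.sum_Ico_eq_sum_range]
        have : n + 1 - (m + 1) = n + 2 - (m + 2) := by omega
        rw [this]
        apply Finset.sum_congr rfl
        intro j _
        simp only [ht', if_neg (by omega : ¬ (m + 1 + j < m + 1)),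
          if_neg (by omega : ¬ (m + 1 + j + 1 < m + 1))]
        have e1 : m + 1 + j + 1 = m + 2 + j := by omega
        have e2 : m + 2 + j + 1 = m + 1 + j + 1 + 1 := by omega
        rw [e1, e2, e1]
      rw [hsplit1, hsplit2, hc1, hc2, hc3, hE]
      ring
    -- bound on |E|
    have hEbound : |E| ≤ Kf * Kg * ((2 * Δ) ^ (β + γ) * ((1 : ℝ) / (n + 1)) ^ (β + γ)) := by
      have hfb : |f (t (m + 1)) - f (t m)| ≤ Kf * d ^ β := by
        refine (hf _ (hmem _ (by omega)) _ (hmem _ (by omega))).trans ?_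
        apply mul_le_mul_of_nonneg_left _ hKf
        rw [abs_of_nonneg (sub_nonneg.2 (part_le hmono (by omega) (by omega)))]
        apply Real.rpow_le_rpow (sub_nonneg.2 (part_le hmono (by omega) (by omega)))
          _ hβ0.le
        have := part_le hmono (show m + 1 ≤ m + 2 by omega) (by omega)
        simp only [hd]; linarith
      have hgb : |g (t (m + 2)) - g (t (m + 1))| ≤ Kg * d ^ γ := by
        refine (hg _ (hmem _ (by omega)) _ (hmem _ (by omega))).trans ?_
        apply mul_le_mul_of_nonneg_left _ hKg
        rw [abs_of_nonneg (sub_nonneg.2 (part_le hmono (by omega) (by omega)))]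
        apply Real.rpow_le_rpow (sub_nonneg.2 (part_le hmono (by omega) (by omega)))
          _ hγ0.le
        have := part_le hmono (show m ≤ m + 1 by omega) (by omega)
        simp only [hd]; linarith
      have h1 : |E| ≤ (Kf * d ^ β) * (Kg * d ^ γ) := by
        rw [hE, abs_mul]
        exact mul_le_mul hfb hgb (abs_nonneg _) (by positivity)
      have h2 : (Kf * d ^ β) * (Kg * d ^ γ) = Kf * Kg * d ^ (β + γ) := by
        rw [Real.rpow_add hd0]; ring
      have h3 : d ^ (β + γ) ≤ (2 * Δ) ^ (β + γ) * ((1 : ℝ) / (n + 1)) ^ (β + γ) := by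
        rw [← Real.mul_rpow (by positivity) (by positivity)]
        apply Real.rpow_le_rpow hd0.le _ (by positivity)
        calc d ≤ 2 * Δ / (n + 1) := hdle
        _ = 2 * Δ * (1 / (n + 1)) := by ring
      calc |E| ≤ Kf * Kg * d ^ (β + γ) := by rw [← h2]; exact h1
      _ ≤ Kf * Kg * ((2 * Δ) ^ (β + γ) * ((1 : ℝ) / (n + 1)) ^ (β + γ)) := by
          apply mul_le_mul_of_nonneg_left h3 (by positivity)
    -- conclude
    have hIH := IH t' ht'mono ht'mem
    rw [ht'0, ht'top] at hIH
    have hΔeq : t' (n + 1 + 1)  = t' (n + 1 + 1) := rfl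
    rw [Finset.sum_range_succ, hsum]
    have : riemannSum f g t' (n + 1) + E - f (t 0) * (g (t (n + 2)) - g (t 0)) =
        (riemannSum f g t' (n + 1) - f (t 0) * (g (t (n + 2)) - g (t 0))) + E := by ring
    rw [show n + 1 + 1 = n + 2 from rfl, this]
    calc |(riemannSum f g t' (n + 1) - f (t 0) * (g (t (n + 2)) - g (t 0))) + E|
        ≤ |riemannSum f g t' (n + 1) - f (t 0) * (g (t (n + 2)) - g (t 0))| + |E| := abs_add_le _ _
      _ ≤ Kf * Kg * (2 * Δ) ^ (β + γ) * ∑ m ∈ Finset.range n, ((1 : ℝ) / (m + 1)) ^ (β + γ)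
          + Kf * Kg * ((2 * Δ) ^ (β + γ) * ((1 : ℝ) / (n + 1)) ^ (β + γ)) := add_le_add hIH hEbound
      _ = Kf * Kg * (2 * Δ) ^ (β + γ) *
          (∑ m ∈ Finset.range n, ((1 : ℝ) / (m + 1)) ^ (β + γ) + ((1 : ℝ) / (n + 1)) ^ (β + γ)) := by
          ring

noncomputable def youngZeta (s : ℝ) : ℝ := ∑' k : ℕ, ((1 : ℝ) / (k + 1)) ^ s

lemma youngZeta_summable {s : ℝ} (hs : 1 < s) :
    Summable (fun k : ℕ => ((1 : ℝ) / (k + 1)) ^ s) := by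
  have h := Real.summable_one_div_nat_rpow.2 hs
  have h2 := (summable_nat_add_iff 1).2 h
  refine h2.congr fun k => ?_
  push_cast
  rw [Real.div_rpow zero_le_one (by positivity), Real.one_rpow]

lemma youngZeta_nonneg (s : ℝ) : 0 ≤ youngZeta s :=
  tsum_nonneg fun k => by positivity

theorem youngC (β γ : ℝ) (hβ0 : 0 < β) (hβ1 : β ≤ 1) (hγ0 : 0 < γ) (hγ1 : γ ≤ 1)
    (hβγ : 1 < β + γ)
    (f g : ℝ → ℝ) (Kf Kg : ℝ) (hKf : 0 ≤ Kf) (hKg : 0 ≤ Kg)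
    (a b : ℝ)
    (hf : ∀ x ∈ Set.Icc a b, ∀ y ∈ Set.Icc a b, |f x - f y| ≤ Kf * |x - y| ^ β)
    (hg : ∀ x ∈ Set.Icc a b, ∀ y ∈ Set.Icc a b, |g x - g y| ≤ Kg * |x - y| ^ γ)
    (n : ℕ) (t : ℕ → ℝ) (hmono : ∀ i < n, t i < t (i + 1))
    (hmem : ∀ i ≤ n, t i ∈ Set.Icc a b) :
    |riemannSum f g t n - f (t 0) * (g (t n) - g (t 0))| ≤
      (4 * (1 + youngZeta (β + γ))) * Kf * Kg * (t n - t 0) ^ (β + γ) := by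
  rcases n with _ | n
  · simp only [riemannSum, Finset.range_zero, Finset.sum_empty, sub_self, mul_zero,
      zero_sub, abs_neg, abs_zero, Real.zero_rpow (by positivity : β + γ ≠ 0)]
    simp
  · have h := youngA β γ hβ0 hγ0 f g Kf Kg hKf hKg a b hf hg n t hmono hmem
    refine h.trans ?_
    have hΔ0 : 0 ≤ t (n + 1) - t 0 :=
      sub_nonneg.2 (part_le hmono (Nat.zero_le _) le_rfl)
    have h2 : (2 * (t (n + 1) - t 0)) ^ (β + γ) ≤ 4 * (t (n + 1) - t 0) ^ (β + γ) := by
      rw [Real.mul_rpow (by norm_num) hΔ0]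
      apply mul_le_mul_of_nonneg_right _ (by positivity)
      calc (2 : ℝ) ^ (β + γ) ≤ (2 : ℝ) ^ (2 : ℝ) :=
            Real.rpow_le_rpow_of_exponent_le (by norm_num) (by linarith)
        _ = 4 := by
            rw [show (2:ℝ) = ((2:ℕ):ℝ) by norm_num, Real.rpow_natCast]
            norm_num
    have h3 : ∑ m ∈ Finset.range n, ((1 : ℝ) / (m + 1)) ^ (β + γ) ≤ 1 + youngZeta (β + γ) := by
      have := (youngZeta_summable hβγ).sum_le_tsum (Finset.range n)
        (fun k (_ : k ∉ Finset.range n) => by positivity)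
      refine this.trans ?_
      unfold youngZeta
      linarith [youngZeta_nonneg (β + γ)]
    calc Kf * Kg * (2 * (t (n + 1) - t 0)) ^ (β + γ) *
          ∑ m ∈ Finset.range n, ((1 : ℝ) / (m + 1)) ^ (β + γ)
        ≤ Kf * Kg * (4 * (t (n + 1) - t 0) ^ (β + γ)) * (1 + youngZeta (β + γ)) := by
          apply mul_le_mul (mul_le_mul_of_nonneg_left h2 (by positivity)) h3
            (Finset.sum_nonneg fun k _ => by positivity)
          positivity
      _ = (4 * (1 + youngZeta (β + γ))) * Kf * Kg * (t (n + 1) - t 0) ^ (β + γ) := by ring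

theorem youngRefine (β γ : ℝ) (hβ0 : 0 < β) (hβ1 : β ≤ 1) (hγ0 : 0 < γ) (hγ1 : γ ≤ 1)
    (hβγ : 1 < β + γ)
    (f g : ℝ → ℝ) (Kf Kg : ℝ) (hKf : 0 ≤ Kf) (hKg : 0 ≤ Kg)
    (a b : ℝ)
    (hf : ∀ x ∈ Set.Icc a b, ∀ y ∈ Set.Icc a b, |f x - f y| ≤ Kf * |x - y| ^ β)
    (hg : ∀ x ∈ Set.Icc a b, ∀ y ∈ Set.Icc a b, |g x - g y| ≤ Kg * |x - y| ^ γ)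
    (t : ℕ → ℝ) (n : ℕ) (hmt : ∀ i < n, t i < t (i + 1)) (het : ∀ i ≤ n, t i ∈ Set.Icc a b)
    (u : ℕ → ℝ) (M : ℕ) (hmu : ∀ i < M, u i < u (i + 1)) (heu : ∀ i ≤ M, u i ∈ Set.Icc a b)
    (h0 : u 0 = t 0) (hM : u M = t n)
    (href : ∀ i ≤ n, ∃ j ≤ M, u j = t i) :
    |riemannSum f g u M - riemannSum f g t n| ≤
      (4 * (1 + youngZeta (β + γ))) * Kf * Kg *
        ∑ i ∈ Finset.range n, (t (i + 1) - t i) ^ (β + γ) := by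
  classical
  -- the index map σ
  set σ : ℕ → ℕ := fun i => if h : i ≤ n then (href i h).choose else 0 with hσdef
  have hσ : ∀ i ≤ n, σ i ≤ M ∧ u (σ i) = t i := by
    intro i hi
    simp only [hσdef, dif_pos hi]
    exact ⟨(href i hi).choose_spec.1, (href i hi).choose_spec.2⟩
  have hσmono : ∀ {i j}, i < j → j ≤ n → σ i < σ j := by
    intro i j hij hjn
    by_contra hcon
    push_neg at hcon
    have h1 : u (σ j) ≤ u (σ i) := part_le hmu hcon (hσ i (by omega)).1
    rw [(hσ i (by omega)).2, (hσ j hjn).2] at h1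
    exact absurd (part_lt hmt hij hjn) (not_lt.2 h1)
  have hσ0 : σ 0 = 0 := by
    by_contra hcon
    have h1 : u 0 < u (σ 0) := part_lt hmu (by omega) (hσ 0 (by omega)).1
    rw [(hσ 0 (by omega)).2, h0] at h1
    exact lt_irrefl _ h1
  have hσn : σ n = M := by
    by_contra hcon
    have hle : σ n ≤ M := (hσ n le_rfl).1
    have h1 : u (σ n) < u M := part_lt hmu (by omega) le_rfl
    rw [(hσ n le_rfl).2, hM] at h1
    exact lt_irrefl _ h1
  set F : ℕ → ℝ := fun j => f (u j) * (g (u (j + 1)) - g (u j)) with hF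
  -- block decomposition
  have hblocks : ∀ k ≤ n, ∑ i ∈ Finset.range k, (∑ j ∈ Finset.Ico (σ i) (σ (i + 1)), F j)
      = ∑ j ∈ Finset.Ico (σ 0) (σ k), F j := by
    intro k hk
    induction k with
    | zero => simp
    | succ k IHk =>
      rw [Finset.sum_range_succ, IHk (by omega)]
      refine Finset.sum_Ico_consecutive _ ?_ ?_
      · rcases Nat.eq_zero_or_pos k with rfl | hk0
        · exact le_rfl
        · exact (hσmono hk0 (by omega)).le
      · exact (hσmono (by omega) hk).le
  have hRSu : riemannSum f g u M =
      ∑ i ∈ Finset.range n, (∑ j ∈ Finset.Ico (σ i) (σ (i + 1)), F j) := by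
    rw [hblocks n le_rfl, hσ0, hσn, riemannSum, Finset.range_eq_Ico]
  -- per-block estimate
  have hblock : ∀ i < n, |(∑ j ∈ Finset.Ico (σ i) (σ (i + 1)), F j)
      - f (t i) * (g (t (i + 1)) - g (t i))| ≤
      (4 * (1 + youngZeta (β + γ))) * Kf * Kg * (t (i + 1) - t i) ^ (β + γ) := by
    intro i hi
    set v : ℕ → ℝ := fun j => u (σ i + j) with hv
    set k : ℕ := σ (i + 1) - σ i with hk
    have hσi : σ i ≤ M := (hσ i (by omega)).1
    have hσi1 : σ (i + 1) ≤ M := (hσ (i + 1) (by omega)).1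
    have hlt : σ i < σ (i + 1) := hσmono (by omega) (by omega)
    have hik : σ i + k = σ (i + 1) := by omega
    have hbsum : ∑ j ∈ Finset.Ico (σ i) (σ (i + 1)), F j = riemannSum f g v k := by
      rw [Finset.sum_Ico_eq_sum_range, riemannSum]
      apply Finset.sum_congr (by rw [hk]) fun j _ => ?_
      simp only [hF, hv]
      rw [show σ i + j + 1 = σ i + (j + 1) by omega]
    have hmv : ∀ j < k, v j < v (j + 1) := by
      intro j hj
      simp only [hv]
      rw [show σ i + (j + 1) = σ i + j + 1 by omega]
      exact hmu (σ i + j) (by omega)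
    have hev : ∀ j ≤ k, v j ∈ Set.Icc a b := fun j hj => heu (σ i + j) (by omega)
    have hv0 : v 0 = t i := by
      simp only [hv, Nat.add_zero]
      exact (hσ i (by omega)).2
    have hvk : v k = t (i + 1) := by
      simp only [hv, hik]
      exact (hσ (i + 1) (by omega)).2
    have := youngC β γ hβ0 hβ1 hγ0 hγ1 hβγ f g Kf Kg hKf hKg a b hf hg k v hmv hev
    rw [hv0, hvk, ← hbsum] at this
    exact this
  -- conclude
  rw [hRSu, riemannSum, ← Finset.sum_sub_distrib]
  calc |∑ i ∈ Finset.range n, ((∑ j ∈ Finset.Ico (σ i) (σ (i + 1)), F j)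
          - f (t i) * (g (t (i + 1)) - g (t i)))|
      ≤ ∑ i ∈ Finset.range n, |(∑ j ∈ Finset.Ico (σ i) (σ (i + 1)), F j)
          - f (t i) * (g (t (i + 1)) - g (t i))| := Finset.abs_sum_le_sum_abs _ _
    _ ≤ ∑ i ∈ Finset.range n,
          (4 * (1 + youngZeta (β + γ))) * Kf * Kg * (t (i + 1) - t i) ^ (β + γ) :=
        Finset.sum_le_sum fun i hi => hblock i (Finset.mem_range.1 hi)
    _ = (4 * (1 + youngZeta (β + γ))) * Kf * Kg *
          ∑ i ∈ Finset.range n, (t (i + 1) - t i) ^ (β + γ) := by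
        rw [Finset.mul_sum]

lemma isPartition_mem {a b : ℝ} {t : ℕ → ℝ} {n : ℕ} (h : IsPartition a b t n) :
    ∀ i ≤ n, t i ∈ Set.Icc a b := by
  intro i hi
  exact ⟨h.1 ▸ part_le h.2.2 (Nat.zero_le i) hi, h.2.1 ▸ part_le h.2.2 hi le_rfl⟩

lemma exists_refinement {a b : ℝ} (hab : a < b) {t : ℕ → ℝ} {n : ℕ}
    (ht : IsPartition a b t n) {u : ℕ → ℝ} {M : ℕ} (hu : IsPartition a b u M) :
    ∃ (w : ℕ → ℝ) (N : ℕ), IsPartition a b w N ∧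
      (∀ i ≤ n, ∃ j ≤ N, w j = t i) ∧ (∀ i ≤ M, ∃ j ≤ N, w j = u i) := by
  classical
  set F : Finset ℝ := ((Finset.range (n + 1)).image t) ∪ ((Finset.range (M + 1)).image u)
    with hFdef
  have hmemF : ∀ x ∈ F, x ∈ Set.Icc a b := by
    intro x hx
    simp only [hFdef, Finset.mem_union, Finset.mem_image, Finset.mem_range] at hx
    rcases hx with ⟨i, hi, rfl⟩ | ⟨i, hi, rfl⟩
    · exact isPartition_mem ht i (by omega)
    · exact isPartition_mem hu i (by omega)
  have haF : a ∈ F := by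
    simp only [hFdef, Finset.mem_union, Finset.mem_image, Finset.mem_range]
    exact Or.inl ⟨0, by omega, ht.1⟩
  have hbF : b ∈ F := by
    simp only [hFdef, Finset.mem_union, Finset.mem_image, Finset.mem_range]
    exact Or.inl ⟨n, by omega, ht.2.1⟩
  set L : List ℝ := F.sort (· ≤ ·) with hL
  have hlen : L.length = F.card := Finset.length_sort _
  have hsortlt : L.Pairwise (· < ·) := (Finset.sortedLT_sort F).pairwise
  have hcard : 1 ≤ F.card := Finset.card_pos.2 ⟨a, haF⟩
  set N : ℕ := F.card - 1 with hN
  have hNlen : L.length = N + 1 := by omega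
  set w : ℕ → ℝ := fun i => L.getD i 0 with hw
  have hwget : ∀ i (h : i < L.length), w i = L.get ⟨i, h⟩ := by
    intro i h
    simp only [hw]
    rw [List.getD_eq_getElem?_getD, List.getElem?_eq_getElem h]
    rfl
  have hwmem : ∀ i ≤ N, w i ∈ F := by
    intro i hi
    have h : i < L.length := by omega
    rw [hwget i h]
    exact (Finset.mem_sort (α := ℝ) (· ≤ ·)).1 (L.get_mem _)
  have hmono : ∀ i j, i < j → j ≤ N → w i < w j := by
    intro i j hij hj
    have hi' : i < L.length := by omega
    have hj' : j < L.length := by omega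
    rw [hwget i hi', hwget j hj']
    exact List.pairwise_iff_get.1 hsortlt ⟨i, hi'⟩ ⟨j, hj'⟩ hij
  have hexists : ∀ x ∈ F, ∃ j ≤ N, w j = x := by
    intro x hx
    have hxL : x ∈ L := (Finset.mem_sort (α := ℝ) (· ≤ ·)).2 hx
    obtain ⟨⟨j, hj⟩, hget⟩ := List.mem_iff_get.1 hxL
    exact ⟨j, by omega, by rw [hwget j hj]; exact hget⟩
  have hw0 : w 0 = a := by
    obtain ⟨j, hj, hja⟩ := hexists a haF
    rcases Nat.eq_zero_or_pos j with rfl | hj0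
    · exact hja
    · have h1 : w 0 < w j := hmono 0 j hj0 hj
      have h2 : a ≤ w 0 := (hmemF _ (hwmem 0 (by omega))).1
      rw [hja] at h1
      linarith
  have hwN : w N = b := by
    obtain ⟨j, hj, hjb⟩ := hexists b hbF
    rcases Nat.lt_or_ge j N with hjN | hjN
    · have h1 : w j < w N := hmono j N hjN le_rfl
      have h2 : w N ≤ b := (hmemF _ (hwmem N le_rfl)).2
      rw [hjb] at h1
      linarith
    · have : j = N := by omega
      rw [← this, hjb]
  refine ⟨w, N, ⟨hw0, hwN, fun i hi => hmono i (i + 1) (by omega) (by omega)⟩, ?_, ?_⟩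
  · intro i hi
    apply hexists
    simp only [hFdef, Finset.mem_union, Finset.mem_image, Finset.mem_range]
    exact Or.inl ⟨i, by omega, rfl⟩
  · intro i hi
    apply hexists
    simp only [hFdef, Finset.mem_union, Finset.mem_image, Finset.mem_range]
    exact Or.inr ⟨i, by omega, rfl⟩

lemma gap_sum_le {a b δ : ℝ} (hδ : 0 < δ) {t : ℕ → ℝ} {n : ℕ} (ht : IsPartition a b t n)
    {s : ℝ} (hs : 1 < s) (hmesh : ∀ i < n, t (i + 1) - t i ≤ δ) :
    ∑ i ∈ Finset.range n, (t (i + 1) - t i) ^ s ≤ δ ^ (s - 1) * (b - a) := by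
  have h1 : ∑ i ∈ Finset.range n, (t (i + 1) - t i) ^ s ≤
      ∑ i ∈ Finset.range n, δ ^ (s - 1) * (t (i + 1) - t i) := by
    apply Finset.sum_le_sum
    intro i hi
    simp only [Finset.mem_range] at hi
    have hg0 : 0 < t (i + 1) - t i := sub_pos.2 (ht.2.2 i hi)
    calc (t (i + 1) - t i) ^ s = (t (i + 1) - t i) ^ (s - 1) * (t (i + 1) - t i) := by
          rw [← Real.rpow_add_one hg0.ne' (s - 1)]
          norm_num
      _ ≤ δ ^ (s - 1) * (t (i + 1) - t i) := by
          apply mul_le_mul_of_nonneg_right _ hg0.le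
          exact Real.rpow_le_rpow hg0.le (hmesh i hi) (by linarith)
  rw [← Finset.mul_sum, Finset.sum_range_sub, ht.1, ht.2.1] at h1
  exact h1

lemma youngDiff (β γ : ℝ) (hβ0 : 0 < β) (hβ1 : β ≤ 1) (hγ0 : 0 < γ) (hγ1 : γ ≤ 1)
    (hβγ : 1 < β + γ)
    (f g : ℝ → ℝ) (Kf Kg : ℝ) (hKf : 0 ≤ Kf) (hKg : 0 ≤ Kg)
    (a b : ℝ) (hab : a < b)
    (hf : ∀ x ∈ Set.Icc a b, ∀ y ∈ Set.Icc a b, |f x - f y| ≤ Kf * |x - y| ^ β)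
    (hg : ∀ x ∈ Set.Icc a b, ∀ y ∈ Set.Icc a b, |g x - g y| ≤ Kg * |x - y| ^ γ)
    {t : ℕ → ℝ} {n : ℕ} (ht : IsPartition a b t n)
    {u : ℕ → ℝ} {M : ℕ} (hu : IsPartition a b u M)
    {δt δu : ℝ} (hδt : 0 < δt) (hδu : 0 < δu)
    (hmt : ∀ i < n, t (i + 1) - t i ≤ δt) (hmu : ∀ i < M, u (i + 1) - u i ≤ δu) :
    |riemannSum f g t n - riemannSum f g u M| ≤
      (4 * (1 + youngZeta (β + γ))) * Kf * Kg *
        ((δt ^ (β + γ - 1) + δu ^ (β + γ - 1)) * (b - a)) := by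
  obtain ⟨w, N, hw, hwt, hwu⟩ := exists_refinement hab ht hu
  have h0t : w 0 = t 0 := by rw [hw.1, ht.1]
  have hNt : w N = t n := by rw [hw.2.1, ht.2.1]
  have h0u : w 0 = u 0 := by rw [hw.1, hu.1]
  have hNu : w N = u M := by rw [hw.2.1, hu.2.1]
  have h1 := youngRefine β γ hβ0 hβ1 hγ0 hγ1 hβγ f g Kf Kg hKf hKg a b hf hg
    t n ht.2.2 (isPartition_mem ht) w N hw.2.2 (isPartition_mem hw) h0t hNt hwt
  have h2 := youngRefine β γ hβ0 hβ1 hγ0 hγ1 hβγ f g Kf Kg hKf hKg a b hf hg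
    u M hu.2.2 (isPartition_mem hu) w N hw.2.2 (isPartition_mem hw) h0u hNu hwu
  have hg1 := gap_sum_le hδt ht hβγ hmt
  have hg2 := gap_sum_le hδu hu hβγ hmu
  have hC : (0:ℝ) ≤ (4 * (1 + youngZeta (β + γ))) * Kf * Kg := by
    have := youngZeta_nonneg (β + γ)
    positivity
  calc |riemannSum f g t n - riemannSum f g u M|
      ≤ |riemannSum f g w N - riemannSum f g t n| + |riemannSum f g w N - riemannSum f g u M| := by
        rw [abs_sub_comm (riemannSum f g w N) (riemannSum f g t n)]
        exact abs_sub_le _ _ _ |>.trans_eq (by rw [abs_sub_comm]) |>.trans_eq rfl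
    _ ≤ (4 * (1 + youngZeta (β + γ))) * Kf * Kg * (δt ^ (β + γ - 1) * (b - a))
        + (4 * (1 + youngZeta (β + γ))) * Kf * Kg * (δu ^ (β + γ - 1) * (b - a)) := by
        apply add_le_add
        · exact h1.trans (mul_le_mul_of_nonneg_left hg1 hC)
        · exact h2.trans (mul_le_mul_of_nonneg_left hg2 hC)
    _ = (4 * (1 + youngZeta (β + γ))) * Kf * Kg *
        ((δt ^ (β + γ - 1) + δu ^ (β + γ - 1)) * (b - a)) := by ring

/-- Young's theorem: for `β + γ > 1`, a `β`-Hölder `f` and a `γ`-Hölder `g` on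
`[a,b]`, the Young integral `∫_a^b f dg` exists (as a limit of left-endpoint
Riemann sums along any sequence of partitions with vanishing mesh) and
satisfies `|∫_a^b f dg − f(a)(g(b) − g(a))| ≤ C_{β,γ}·[f]_β·[g]_γ·(b−a)^{β+γ}`
with a constant depending only on `β` and `γ`. -/
theorem stmt3 (β γ : ℝ) (hβ : β ∈ Ioc (0 : ℝ) 1) (hγ : γ ∈ Ioc (0 : ℝ) 1)
    (hβγ : 1 < β + γ) :
    ∃ C : ℝ, 0 < C ∧
      ∀ (a b : ℝ), a < b →
        ∀ (f g : ℝ → ℝ) (Kf Kg : ℝ), 0 ≤ Kf → 0 ≤ Kg →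
          (∀ x ∈ Icc a b, ∀ y ∈ Icc a b, |f x - f y| ≤ Kf * |x - y| ^ β) →
          (∀ x ∈ Icc a b, ∀ y ∈ Icc a b, |g x - g y| ≤ Kg * |x - y| ^ γ) →
          ∃ I : ℝ, IsYoungIntegral a b f g I ∧
            |I - f a * (g b - g a)| ≤ C * Kf * Kg * (b - a) ^ (β + γ) := by
  obtain ⟨hβ0, hβ1⟩ := hβ
  obtain ⟨hγ0, hγ1⟩ := hγ
  refine ⟨4 * (1 + youngZeta (β + γ)), by linarith [youngZeta_nonneg (β + γ)], ?_⟩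
  intro a b hab f g Kf Kg hKf hKg hf hg
  set C : ℝ := 4 * (1 + youngZeta (β + γ)) with hC
  have hC0 : 0 < C := by
    have := youngZeta_nonneg (β + γ)
    rw [hC]; linarith
  -- uniform partitions
  set p : ℕ → ℕ → ℝ := fun k i => a + i * ((b - a) / (k + 1)) with hp
  have hstep : ∀ k : ℕ, (0:ℝ) < (b - a) / (k + 1) :=
    fun k => div_pos (by linarith) (by positivity)
  have hgap : ∀ k i : ℕ, p k (i + 1) - p k i = (b - a) / (k + 1) := by
    intro k i
    simp only [hp]
    push_cast
    ring
  have hpart : ∀ k, IsPartition a b (p k) (k + 1) := by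
    intro k
    refine ⟨by simp [hp], ?_, ?_⟩
    · simp only [hp]
      push_cast
      field_simp
      ring
    · intro i _
      simp only [hp]
      push_cast
      have e2 := hstep k
      have e3 := mul_lt_mul_of_pos_right (show (i:ℝ) < i + 1 by linarith) e2
      linarith
  set S : ℕ → ℝ := fun k => riemannSum f g (p k) (k + 1) with hS
  set r : ℕ → ℝ := fun k => ((b - a) / (k + 1)) ^ (β + γ - 1) with hr
  have hrpos : ∀ k, 0 ≤ r k := fun k => Real.rpow_nonneg (hstep k).le _
  have hr0 : Tendsto r atTop (𝓝 0) := by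
    have h1 : Tendsto (fun k : ℕ => (b - a) / (k + 1 : ℝ)) atTop (𝓝 0) := by
      have h0 := tendsto_one_div_add_atTop_nhds_zero_nat.const_mul (b - a)
      rw [mul_zero] at h0
      refine h0.congr fun k => ?_
      rw [mul_one_div]
    have h2 : ContinuousAt (fun x : ℝ => x ^ (β + γ - 1)) 0 :=
      Real.continuousAt_rpow_const 0 (β + γ - 1) (Or.inr (by linarith))
    have hh := h2.tendsto.comp h1
    rw [Real.zero_rpow (by linarith : β + γ - 1 ≠ 0)] at hh
    exact hh
  have hranti : ∀ {N k : ℕ}, N ≤ k → r k ≤ r N := by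
    intro N k hNk
    apply Real.rpow_le_rpow (hstep k).le _ (by linarith)
    apply div_le_div_of_nonneg_left (by linarith) (by positivity)
    have : (N:ℝ) ≤ (k:ℝ) := Nat.cast_le.2 hNk
    push_cast; linarith
  -- key comparison
  have hkey : ∀ (t : ℕ → ℝ) (n : ℕ), IsPartition a b t n →
      ∀ δ : ℝ, 0 < δ → (∀ i < n, t (i + 1) - t i ≤ δ) → ∀ k : ℕ,
      |riemannSum f g t n - S k| ≤ C * Kf * Kg * ((δ ^ (β + γ - 1) + r k) * (b - a)) := by
    intro t n htp δ hδ hmesh k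
    exact youngDiff β γ hβ0 hβ1 hγ0 hγ1 hβγ f g Kf Kg hKf hKg a b hab hf hg
      htp (hpart k) hδ (hstep k) hmesh (fun i _ => (hgap k i).le)
  -- Cauchy / limit
  have hcauchy : CauchySeq S := by
    apply cauchySeq_of_le_tendsto_0 (fun N => C * Kf * Kg * ((r N + r N) * (b - a)))
    · intro k l N hkN hlN
      rw [Real.dist_eq]
      calc |S k - S l| ≤ C * Kf * Kg * ((r k + r l) * (b - a)) := by
            have := hkey (p k) (k + 1) (hpart k) ((b - a) / (k + 1)) (hstep k)
              (fun i _ => (hgap k i).le) l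
            exact this
        _ ≤ C * Kf * Kg * ((r N + r N) * (b - a)) := by
            apply mul_le_mul_of_nonneg_left _ (by positivity)
            apply mul_le_mul_of_nonneg_right _ (by linarith)
            linarith [hranti hkN, hranti hlN]
    · have : Tendsto (fun N => C * Kf * Kg * ((r N + r N) * (b - a))) atTop
          (𝓝 (C * Kf * Kg * ((0 + 0) * (b - a)))) := by
        apply Tendsto.const_mul
        exact ((hr0.add hr0).mul_const (b - a))
      simpa using this
  obtain ⟨I, hI⟩ := cauchySeq_tendsto_of_complete hcauchy
  refine ⟨I, ?_, ?_⟩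
  · -- IsYoungIntegral
    intro t n hpt hmesh
    rw [Metric.tendsto_atTop]
    intro ε hε
    -- choose k with both bounds
    have h1 : Tendsto (fun k => C * Kf * Kg * ((r k + r k) * (b - a))) atTop (𝓝 0) := by
      have : Tendsto (fun k => C * Kf * Kg * ((r k + r k) * (b - a))) atTop
          (𝓝 (C * Kf * Kg * ((0 + 0) * (b - a)))) := by
        apply Tendsto.const_mul
        exact ((hr0.add hr0).mul_const (b - a))
      simpa using this
    obtain ⟨K1, hK1⟩ := (Metric.tendsto_atTop.1 h1) (ε / 2) (by linarith)
    obtain ⟨K2, hK2⟩ := (Metric.tendsto_atTop.1 hI) (ε / 2) (by linarith)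
    set k : ℕ := max K1 K2 with hk
    set δ : ℝ := (b - a) / (k + 1) with hδ
    obtain ⟨K, hK⟩ := hmesh δ (hstep k)
    refine ⟨K, fun j hj => ?_⟩
    have hb1 : |riemannSum f g (t j) (n j) - S k| ≤ C * Kf * Kg * ((r k + r k) * (b - a)) := by
      have := hkey (t j) (n j) (hpt j) δ (hstep k) (hK j hj) k
      simpa only [hδ, hr] using this
    have hb2 : C * Kf * Kg * ((r k + r k) * (b - a)) < ε / 2 := by
      have := hK1 k (le_max_left _ _)
      rw [Real.dist_eq] at this
      have hnn : 0 ≤ C * Kf * Kg * ((r k + r k) * (b - a)) := by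
        have := hrpos k
        have : (0:ℝ) ≤ (r k + r k) * (b - a) := by
          apply mul_nonneg (by linarith [hrpos k]) (by linarith)
        positivity
      rw [abs_of_nonneg (by simpa using hnn)] at this
      simpa using this
    have hb3 : |S k - I| < ε / 2 := by
      have := hK2 k (le_max_right _ _)
      rwa [Real.dist_eq] at this
    rw [Real.dist_eq]
    calc |riemannSum f g (t j) (n j) - I|
        ≤ |riemannSum f g (t j) (n j) - S k| + |S k - I| := abs_sub_le _ _ _
      _ < ε / 2 + ε / 2 := by
          apply add_lt_add_of_le_of_lt (hb1.trans hb2.le) hb3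
      _ = ε := by ring
  · -- boundary estimate
    have hbd : ∀ k, |S k - f a * (g b - g a)| ≤ C * Kf * Kg * (b - a) ^ (β + γ) := by
      intro k
      have h := youngC β γ hβ0 hβ1 hγ0 hγ1 hβγ f g Kf Kg hKf hKg a b hf hg
        (k + 1) (p k) (hpart k).2.2 (isPartition_mem (hpart k))
      rw [(hpart k).1, (hpart k).2.1] at h
      exact h
    have hlim : Tendsto (fun k => |S k - f a * (g b - g a)|) atTop
        (𝓝 |I - f a * (g b - g a)|) := by
      exact ((hI.sub_const _).abs)
    exact le_of_tendsto hlim (Filter.Eventually.of_forall hbd)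
end

section
/- Let β, γ ∈ (0,1] with β + γ > 1. Suppose f_n, f are β-Hölder and g_n, g are γ-Hölder on [a,b], with ‖f_n − f‖_{C^β} → 0 and ‖g_n − g‖_{C^γ} → 0 as n → ∞. Then the Young integrals satisfy ∫_a^b f_n dg_n → ∫_a^b f dg. -/
open MeasureTheory Filter Set
open scoped Topology

/-- The `β`-Hölder norm `‖f‖_{C^β} = sup |f| + [f]_β` of `f` on `[a,b]`. -/
noncomputable def holderNorm (a b β : ℝ) (f : ℝ → ℝ) : ℝ :=
  sSup ((fun x => |f x|) '' Icc a b) +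
    sSup {r : ℝ | ∃ x ∈ Icc a b, ∃ y ∈ Icc a b, x ≠ y ∧ r = |f x - f y| / |x - y| ^ β}

lemma part_mono {a b : ℝ} {t : ℕ → ℝ} {n : ℕ} (h : IsPartition a b t n) :
    ∀ i j, i ≤ j → j ≤ n → t i ≤ t j := by
  intro i j hij hjn
  induction j with
  | zero => simp_all
  | succ m IH =>
    rcases Nat.eq_or_lt_of_le hij with rfl | hlt
    · exact le_rfl
    · exact le_trans (IH (Nat.lt_succ_iff.mp hlt) (le_trans (Nat.le_succ m) hjn))
        (h.2.2 m (Nat.lt_of_succ_le hjn)).le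

lemma part_mem {a b : ℝ} {t : ℕ → ℝ} {n : ℕ} (h : IsPartition a b t n) {i : ℕ} (hi : i ≤ n) :
    t i ∈ Icc a b := by
  constructor
  · rw [← h.1]; exact part_mono h 0 i (Nat.zero_le _) hi
  · rw [← h.2.1]; exact part_mono h i n hi le_rfl

/-- Removing the `j`-th point of a partition. -/
lemma remove_point {a b : ℝ} {t : ℕ → ℝ} {n j : ℕ} (ht : IsPartition a b t n)
    (hj1 : 1 ≤ j) (hjn : j < n) (h G : ℝ → ℝ) :
    IsPartition a b (fun i => if i < j then t i else t (i + 1)) (n - 1) ∧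
    riemannSum h G (fun i => if i < j then t i else t (i + 1)) (n - 1) =
      riemannSum h G t n - (h (t j) - h (t (j - 1))) * (G (t (j + 1)) - G (t j)) := by
  obtain ⟨ht0, htn, hts⟩ := ht
  set t' : ℕ → ℝ := fun i => if i < j then t i else t (i + 1) with ht'
  constructor
  · refine ⟨?_, ?_, ?_⟩
    · simp only [ht']; rw [if_pos (by omega)]; exact ht0
    · simp only [ht']; rw [if_neg (by omega)]
      have : n - 1 + 1 = n := by omega
      rw [this]; exact htn
    · intro i hi
      simp only [ht']
      by_cases h1 : i + 1 < j
      · rw [if_pos (by omega), if_pos h1]; exact hts i (by omega)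
      · by_cases h2 : i < j
        · rw [if_pos h2, if_neg h1]
          exact lt_trans (hts i (by omega)) (hts (i + 1) (by omega))
        · rw [if_neg h2, if_neg h1]; exact hts (i + 1) (by omega)
  · set F : ℕ → ℝ := fun i => h (t i) * (G (t (i+1)) - G (t i)) with hF
    set F' : ℕ → ℝ := fun i => h (t' i) * (G (t' (i+1)) - G (t' i)) with hF'
    show ∑ i ∈ Finset.range (n-1), F' i = ∑ i ∈ Finset.range n, F i
      - (h (t j) - h (t (j - 1))) * (G (t (j + 1)) - G (t j))
    have e1 : ∑ i ∈ Finset.range n, F i =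
        ∑ i ∈ Finset.range (j+1), F i + ∑ i ∈ Finset.Ico (j+1) n, F i := by
      rw [Finset.range_eq_Ico,
        ← Finset.sum_Ico_consecutive F (Nat.zero_le _) (by omega : j + 1 ≤ n), Finset.range_eq_Ico]
    have e2 : ∑ i ∈ Finset.range (j+1), F i
        = ∑ i ∈ Finset.range (j-1), F i + F (j-1) + F j := by
      obtain ⟨m, rfl⟩ : ∃ m, j = m + 1 := ⟨j-1, by omega⟩
      simp [Finset.sum_range_succ]
    have e3a : ∑ i ∈ Finset.range j, F' i = ∑ i ∈ Finset.range (j-1), F' i + F' (j-1) := by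
      obtain ⟨m, rfl⟩ : ∃ m, j = m + 1 := ⟨j-1, by omega⟩
      simp [Finset.sum_range_succ]
    have e3 : ∑ i ∈ Finset.range (n-1), F' i =
        (∑ i ∈ Finset.range (j-1), F' i + F' (j-1)) + ∑ i ∈ Finset.Ico j (n-1), F' i := by
      rw [← e3a, Finset.range_eq_Ico,
        ← Finset.sum_Ico_consecutive F' (Nat.zero_le j) (by omega : j ≤ n - 1), Finset.range_eq_Ico]
    have e4 : ∑ i ∈ Finset.range (j-1), F' i = ∑ i ∈ Finset.range (j-1), F i := by
      refine Finset.sum_congr rfl ?_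
      intro i hi
      simp only [Finset.mem_range] at hi
      simp only [hF, hF', ht']
      rw [if_pos (by omega), if_pos (by omega)]
    have e5 : F' (j-1) = h (t (j-1)) * (G (t (j+1)) - G (t (j-1))) := by
      simp only [hF', ht']
      rw [if_pos (by omega : j - 1 < j), if_neg (by omega : ¬ (j - 1 + 1 < j))]
      have : j - 1 + 1 + 1 = j + 1 := by omega
      rw [this]
    have e6 : ∑ i ∈ Finset.Ico j (n-1), F' i = ∑ i ∈ Finset.Ico (j+1) n, F i := by
      rw [Finset.sum_Ico_eq_sum_range, Finset.sum_Ico_eq_sum_range]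
      have hn : n - 1 - j = n - (j+1) := by omega
      rw [hn]
      refine Finset.sum_congr rfl ?_
      intro i hi
      simp only [Finset.mem_range] at hi
      simp only [hF, hF', ht']
      rw [if_neg (by omega : ¬ (j + i < j)), if_neg (by omega : ¬ (j + i + 1 < j))]
      have h1 : j + i + 1 = j + 1 + i := by omega
      rw [h1]
    have hjj : j - 1 + 1 = j := by omega
    rw [e3, e4, e5, e6, e1, e2]
    simp only [hF, hjj]
    ring

lemma young_aux (β γ : ℝ) (hβ0 : 0 < β) (hγ0 : 0 < γ)
    (a b : ℝ) (hab : a < b) (h G : ℝ → ℝ) (Kh Kg : ℝ) (hKh : 0 ≤ Kh) (hKg : 0 ≤ Kg)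
    (Hh : ∀ x ∈ Icc a b, ∀ y ∈ Icc a b, |h x - h y| ≤ Kh * |x - y| ^ β)
    (HG : ∀ x ∈ Icc a b, ∀ y ∈ Icc a b, |G x - G y| ≤ Kg * |x - y| ^ γ) :
    ∀ n t, IsPartition a b t n →
      |riemannSum h G t n - h a * (G b - G a)| ≤
        Kh * Kg * (2 * (b - a)) ^ (β + γ) *
          ∑ j ∈ Finset.range (n - 1), ((j : ℝ) + 1) ^ (-(β + γ)) := by
  intro n
  induction n using Nat.strong_induction_on with
  | _ n IH =>
  intro t ht
  match n, ht with
  | 0, ht => exact absurd (ht.1.symm.trans ht.2.1) (ne_of_lt hab)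
  | 1, ht => 
    have : riemannSum h G t 1 = h a * (G b - G a) := by
      unfold riemannSum
      rw [Finset.sum_range_one, ht.1]
      have h1 : t 1 = b := ht.2.1
      rw [h1, ← ht.1]
    simp [this]
  | (m + 2), ht =>
    set n := m + 2 with hn
    -- choose j minimizing t (j+1) - t (j-1)
    have hm2 : (2:ℕ) ≤ n := by omega
    have hN : (0:ℝ) < (n:ℝ) - 1 := by
      have : (2:ℝ) ≤ (n:ℝ) := by exact_mod_cast hm2
      linarith
    have hsum : ∑ j ∈ Finset.Ico 1 n, (t (j+1) - t (j-1)) ≤ 2 * (b - a) := by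
      have split : ∀ j ∈ Finset.Ico 1 n, t (j+1) - t (j-1) =
          ((fun i => t (i+1)) (j) - (fun i => t (i+1)) (j-1)) + (t j - t (j-1)) := by
        intro j hj
        simp only [Finset.mem_Ico] at hj
        simp only
        have : j - 1 + 1 = j := by omega
        rw [this]
        ring
      rw [Finset.sum_congr rfl split, Finset.sum_add_distrib]
      have s1 : ∑ j ∈ Finset.Ico 1 n, ((fun i => t (i+1)) j - (fun i => t (i+1)) (j-1))
          ≤ b - a := by
        have e : ∀ j ∈ Finset.Ico 1 n, (fun i => t (i+1)) j - (fun i => t (i+1)) (j-1)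
            = (fun i => t (i+1)) ((j-1) + 1) - (fun i => t (i+1)) (j-1) := by
          intro j hj
          simp only [Finset.mem_Ico] at hj
          have : j - 1 + 1 = j := by omega
          rw [this]
        rw [Finset.sum_congr rfl e, Finset.sum_Ico_eq_sum_range]
        have e2 : ∀ i, (1 + i - 1 + 1) = i + 1 := by intro i; omega
        have e3 : ∀ i ∈ Finset.range (n-1), (fun i => t (i+1)) (1 + i - 1 + 1) - (fun i => t (i+1)) (1 + i - 1)
            = (fun i => t (i+1)) (i+1) - (fun i => t (i+1)) i := by
          intro i _
          simp only
          congr 3 <;> omega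
        rw [Finset.sum_congr rfl e3, Finset.sum_range_sub (fun i => t (i+1))]
        have e4 : n - 1 + 1 = n := by omega
        rw [e4, ht.2.1]
        have : a ≤ t 1 := (part_mem ht (by omega : 1 ≤ n)).1
        linarith
      have s2 : ∑ j ∈ Finset.Ico 1 n, (t j - t (j-1)) ≤ b - a := by
        rw [Finset.sum_Ico_eq_sum_range]
        have e3 : ∀ i ∈ Finset.range (n-1), (t (1 + i) - t (1 + i - 1))
            = t (i+1) - t i := by
          intro i _
          congr 2 <;> omega
        rw [Finset.sum_congr rfl e3, Finset.sum_range_sub t]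
        rw [ht.1]
        have : t (n-1) ≤ b := (part_mem ht (by omega : n - 1 ≤ n)).2
        linarith
      linarith
    obtain ⟨j, hjmem, hjle⟩ :
        ∃ j ∈ Finset.Ico 1 n, t (j+1) - t (j-1) ≤ 2*(b-a)/((n:ℝ)-1) := by
      apply Finset.exists_le_of_sum_le ⟨1, by simp [Finset.mem_Ico]; omega⟩
      rw [Finset.sum_const, Nat.card_Ico, nsmul_eq_mul]
      have : ((n - 1 : ℕ) : ℝ) = (n:ℝ) - 1 := by
        have : (1:ℕ) ≤ n := by omega
        push_cast [Nat.cast_sub this]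
        ring
      rw [this, mul_div_cancel₀ _ (ne_of_gt hN)]
      exact hsum
    simp only [Finset.mem_Ico] at hjmem
    obtain ⟨hj1, hjn⟩ := hjmem
    have hl1 : t (j-1) < t j := by
      have := ht.2.2 (j-1) (by omega)
      have e : j - 1 + 1 = j := by omega
      rwa [e] at this
    have hl2 : t j < t (j+1) := ht.2.2 j hjn
    have hd0 : (0:ℝ) < t (j+1) - t (j-1) := by linarith
    have hmem1 : t (j-1) ∈ Icc a b := part_mem ht (by omega)
    have hmem2 : t j ∈ Icc a b := part_mem ht (by omega)
    have hmem3 : t (j+1) ∈ Icc a b := part_mem ht (by omega)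
    set d := t (j+1) - t (j-1) with hdd
    set p := β + γ with hp
    have hstep : |(h (t j) - h (t (j-1))) * (G (t (j+1)) - G (t j))|
        ≤ Kh * Kg * d ^ p := by
      rw [abs_mul]
      have b1 : |h (t j) - h (t (j-1))| ≤ Kh * d ^ β := by
        refine le_trans (Hh _ hmem2 _ hmem1) ?_
        have habs : |t j - t (j-1)| ≤ d := by
          rw [abs_of_pos (by linarith)]; linarith
        exact mul_le_mul_of_nonneg_left
          (Real.rpow_le_rpow (abs_nonneg _) habs hβ0.le) hKh
      have b2 : |G (t (j+1)) - G (t j)| ≤ Kg * d ^ γ := by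
        refine le_trans (HG _ hmem3 _ hmem2) ?_
        have habs : |t (j+1) - t j| ≤ d := by
          rw [abs_of_pos (by linarith)]; linarith
        exact mul_le_mul_of_nonneg_left
          (Real.rpow_le_rpow (abs_nonneg _) habs hγ0.le) hKg
      calc |h (t j) - h (t (j-1))| * |G (t (j+1)) - G (t j)|
          ≤ (Kh * d ^ β) * (Kg * d ^ γ) :=
            mul_le_mul b1 b2 (abs_nonneg _) (by positivity)
        _ = Kh * Kg * (d ^ β * d ^ γ) := by ring
        _ = Kh * Kg * d ^ p := by rw [← Real.rpow_add hd0]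
    have hdpow : d ^ p ≤ (2*(b-a)) ^ p * ((n:ℝ)-1) ^ (-p) := by
      have h1 : d ^ p ≤ (2*(b-a)/((n:ℝ)-1)) ^ p :=
        Real.rpow_le_rpow hd0.le hjle (by positivity)
      rwa [Real.div_rpow (by linarith : (0:ℝ) ≤ 2*(b-a)) hN.le,
        div_eq_mul_inv, ← Real.rpow_neg hN.le] at h1
    obtain ⟨ht', hS'⟩ := remove_point ht hj1 hjn h G
    have hcast : ((n:ℝ) - 1) = ((m:ℝ) + 1) := by rw [hn]; push_cast; ring
    have key : riemannSum h G t n - h a * (G b - G a) =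
        (riemannSum h G (fun i => if i < j then t i else t (i + 1)) (n - 1)
          - h a * (G b - G a)) +
        (h (t j) - h (t (j-1))) * (G (t (j+1)) - G (t j)) := by
      rw [hS']; ring
    rw [key]
    refine le_trans (abs_add_le _ _) ?_
    have hIH' : |riemannSum h G (fun i => if i < j then t i else t (i + 1)) (n - 1)
        - h a * (G b - G a)| ≤
        Kh * Kg * (2*(b-a)) ^ p * ∑ i ∈ Finset.range m, ((i:ℝ)+1) ^ (-p) := by
      have h2 := IH (n-1) (by omega) _ ht'
      have e : n - 1 - 1 = m := by omega
      rwa [e] at h2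
    have hstep2 : |(h (t j) - h (t (j-1))) * (G (t (j+1)) - G (t j))| ≤
        Kh * Kg * (2*(b-a)) ^ p * ((m:ℝ)+1) ^ (-p) := by
      refine le_trans hstep ?_
      rw [hcast] at hdpow
      calc Kh * Kg * d ^ p ≤ Kh * Kg * ((2*(b-a))^p * ((m:ℝ)+1)^(-p)) :=
            mul_le_mul_of_nonneg_left hdpow (by positivity)
        _ = Kh * Kg * (2*(b-a)) ^ p * ((m:ℝ)+1) ^ (-p) := by ring
    have hfin : ∑ i ∈ Finset.range (n-1), ((i:ℝ)+1) ^ (-p)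
        = ∑ i ∈ Finset.range m, ((i:ℝ)+1) ^ (-p) + ((m:ℝ)+1) ^ (-p) := by
      rw [show n - 1 = m + 1 by omega, Finset.sum_range_succ]
    rw [hfin, mul_add]
    exact add_le_add hIH' hstep2

lemma summable_aux {p : ℝ} (hp : 1 < p) : Summable (fun j : ℕ => ((j:ℝ)+1) ^ (-p)) := by
  have h1 : Summable (fun n : ℕ => (n:ℝ) ^ (-p)) :=
    Real.summable_nat_rpow.mpr (by linarith)
  have h2 := h1.comp_injective (add_left_injective 1)
  refine h2.congr ?_
  intro j
  norm_num [Function.comp]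

lemma young_tsum (β γ : ℝ) (hβ0 : 0 < β) (hγ0 : 0 < γ) (hβγ : 1 < β + γ)
    (a b : ℝ) (hab : a < b) (h G : ℝ → ℝ) (Kh Kg : ℝ) (hKh : 0 ≤ Kh) (hKg : 0 ≤ Kg)
    (Hh : ∀ x ∈ Icc a b, ∀ y ∈ Icc a b, |h x - h y| ≤ Kh * |x - y| ^ β)
    (HG : ∀ x ∈ Icc a b, ∀ y ∈ Icc a b, |G x - G y| ≤ Kg * |x - y| ^ γ)
    (n : ℕ) (t : ℕ → ℝ) (ht : IsPartition a b t n) :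
    |riemannSum h G t n - h a * (G b - G a)| ≤
      Kh * Kg * ((2 * (b - a)) ^ (β + γ) * ∑' j : ℕ, ((j:ℝ)+1) ^ (-(β+γ))) := by
  refine le_trans (young_aux β γ hβ0 hγ0 a b hab h G Kh Kg hKh hKg Hh HG n t ht) ?_
  have hps : ∑ j ∈ Finset.range (n-1), ((j:ℝ)+1) ^ (-(β+γ))
      ≤ ∑' j : ℕ, ((j:ℝ)+1) ^ (-(β+γ)) :=
    Summable.sum_le_tsum _ (fun i _ => by positivity) (summable_aux hβγ)
  calc Kh * Kg * (2 * (b - a)) ^ (β + γ) * ∑ j ∈ Finset.range (n-1), ((j:ℝ)+1) ^ (-(β+γ))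
      ≤ Kh * Kg * (2 * (b - a)) ^ (β + γ) * ∑' j : ℕ, ((j:ℝ)+1) ^ (-(β+γ)) := by
        refine mul_le_mul_of_nonneg_left hps ?_
        have hba : (0:ℝ) ≤ 2*(b-a) := by linarith
        exact mul_nonneg (mul_nonneg hKh hKg) (Real.rpow_nonneg hba _)
    _ = Kh * Kg * ((2 * (b - a)) ^ (β + γ) * ∑' j : ℕ, ((j:ℝ)+1) ^ (-(β+γ))) := by ring

lemma holder_sSup (a b β : ℝ) (hab : a < b) (hβ : 0 < β) (h : ℝ → ℝ) (K : ℝ)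
    (hK : ∀ x ∈ Icc a b, ∀ y ∈ Icc a b, |h x - h y| ≤ K * |x - y| ^ β) :
    (∀ x ∈ Icc a b, |h x| ≤ sSup ((fun x => |h x|) '' Icc a b)) ∧
    (∀ x ∈ Icc a b, ∀ y ∈ Icc a b, |h x - h y| ≤
      sSup {r : ℝ | ∃ x ∈ Icc a b, ∃ y ∈ Icc a b, x ≠ y ∧ r = |h x - h y| / |x - y| ^ β}
        * |x - y| ^ β) ∧
    0 ≤ sSup ((fun x => |h x|) '' Icc a b) ∧
    0 ≤ sSup {r : ℝ | ∃ x ∈ Icc a b, ∃ y ∈ Icc a b, x ≠ y ∧ r = |h x - h y| / |x - y| ^ β} := by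
  have hmema : a ∈ Icc a b := ⟨le_rfl, hab.le⟩
  have hmemb : b ∈ Icc a b := ⟨hab.le, le_rfl⟩
  have hbddI : BddAbove ((fun x => |h x|) '' Icc a b) := by
    refine ⟨|h a| + max K 0 * (b-a) ^ β, ?_⟩
    rintro r ⟨x, hx, rfl⟩
    have h1 : |h x| - |h a| ≤ |h x - h a| := abs_sub_abs_le_abs_sub _ _
    have h2 : |h x - h a| ≤ K * |x - a| ^ β := hK x hx a hmema
    have h3 : K * |x - a| ^ β ≤ max K 0 * (b-a) ^ β := by
      have hxa : |x - a| ≤ b - a := by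
        rw [abs_of_nonneg (by linarith [hx.1])]
        linarith [hx.2]
      have hr : |x - a| ^ β ≤ (b - a) ^ β :=
        Real.rpow_le_rpow (abs_nonneg _) hxa hβ.le
      calc K * |x - a| ^ β ≤ max K 0 * |x - a| ^ β :=
            mul_le_mul_of_nonneg_right (le_max_left _ _) (by positivity)
        _ ≤ max K 0 * (b-a) ^ β :=
            mul_le_mul_of_nonneg_left hr (le_max_right _ _)
    simp only
    linarith
  have hsupI : ∀ x ∈ Icc a b, |h x| ≤ sSup ((fun x => |h x|) '' Icc a b) :=
    fun x hx => le_csSup hbddI ⟨x, hx, rfl⟩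
  have hbddS : BddAbove {r : ℝ | ∃ x ∈ Icc a b, ∃ y ∈ Icc a b, x ≠ y ∧
      r = |h x - h y| / |x - y| ^ β} := by
    refine ⟨max K 0, ?_⟩
    rintro r ⟨x, hx, y, hy, hxy, rfl⟩
    have hpow : (0:ℝ) < |x - y| ^ β :=
      Real.rpow_pos_of_pos (abs_pos.mpr (sub_ne_zero.mpr hxy)) _
    rw [div_le_iff₀ hpow]
    refine le_trans (hK x hx y hy) ?_
    exact mul_le_mul_of_nonneg_right (le_max_left _ _) (by positivity)
  have hmemS : |h a - h b| / |a - b| ^ β ∈ {r : ℝ | ∃ x ∈ Icc a b, ∃ y ∈ Icc a b, x ≠ y ∧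
      r = |h x - h y| / |x - y| ^ β} := ⟨a, hmema, b, hmemb, hab.ne, rfl⟩
  refine ⟨hsupI, ?_, le_trans (abs_nonneg _) (hsupI a hmema), ?_⟩
  · intro x hx y hy
    by_cases hxy : x = y
    · subst hxy
      simp [Real.zero_rpow hβ.ne']
    · have hpow : (0:ℝ) < |x - y| ^ β :=
        Real.rpow_pos_of_pos (abs_pos.mpr (sub_ne_zero.mpr hxy)) _
      have := le_csSup hbddS ⟨x, hx, y, hy, hxy, rfl⟩
      exact (div_le_iff₀ hpow).mp this
  · exact le_trans (by positivity) (le_csSup hbddS hmemS)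

/-- Continuity of the Young integral: if `f_n → f` in `C^β` and `g_n → g` in
`C^γ` on `[a,b]` with `β + γ > 1`, all functions being Hölder of the respective
exponents, then `∫_a^b f_n dg_n → ∫_a^b f dg`. -/
theorem stmt4 (β γ : ℝ) (hβ : β ∈ Ioc (0 : ℝ) 1) (hγ : γ ∈ Ioc (0 : ℝ) 1)
    (hβγ : 1 < β + γ) (a b : ℝ) (hab : a < b)
    (f : ℕ → ℝ → ℝ) (f₀ : ℝ → ℝ) (g : ℕ → ℝ → ℝ) (g₀ : ℝ → ℝ)
    (hf : ∀ n, ∃ K : ℝ, ∀ x ∈ Icc a b, ∀ y ∈ Icc a b, |f n x - f n y| ≤ K * |x - y| ^ β)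
    (hf₀ : ∃ K : ℝ, ∀ x ∈ Icc a b, ∀ y ∈ Icc a b, |f₀ x - f₀ y| ≤ K * |x - y| ^ β)
    (hg : ∀ n, ∃ K : ℝ, ∀ x ∈ Icc a b, ∀ y ∈ Icc a b, |g n x - g n y| ≤ K * |x - y| ^ γ)
    (hg₀ : ∃ K : ℝ, ∀ x ∈ Icc a b, ∀ y ∈ Icc a b, |g₀ x - g₀ y| ≤ K * |x - y| ^ γ)
    (hfconv : Tendsto (fun n => holderNorm a b β (fun x => f n x - f₀ x)) atTop (𝓝 0))
    (hgconv : Tendsto (fun n => holderNorm a b γ (fun x => g n x - g₀ x)) atTop (𝓝 0))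
    (I : ℕ → ℝ) (I₀ : ℝ)
    (hI : ∀ n, IsYoungIntegral a b (f n) (g n) (I n))
    (hI₀ : IsYoungIntegral a b f₀ g₀ I₀) :
    Tendsto I atTop (𝓝 I₀) := by
  have mema : a ∈ Icc a b := ⟨le_rfl, hab.le⟩
  have memb : b ∈ Icc a b := ⟨hab.le, le_rfl⟩
  obtain ⟨Kf₀, hKf₀⟩ := hf₀
  obtain ⟨Kg₀, hKg₀⟩ := hg₀
  choose Kf hKf using hf
  choose Kg hKg using hg
  have Hf₀ := holder_sSup a b β hab hβ.1 f₀ Kf₀ hKf₀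
  have Hg₀ := holder_sSup a b γ hab hγ.1 g₀ Kg₀ hKg₀
  set Cf₀ : ℝ := sSup {r : ℝ | ∃ x ∈ Icc a b, ∃ y ∈ Icc a b, x ≠ y ∧
      r = |f₀ x - f₀ y| / |x - y| ^ β} with hCf₀def
  set Cg₀ : ℝ := sSup {r : ℝ | ∃ x ∈ Icc a b, ∃ y ∈ Icc a b, x ≠ y ∧
      r = |g₀ x - g₀ y| / |x - y| ^ γ} with hCg₀def
  have hCf₀H : ∀ x ∈ Icc a b, ∀ y ∈ Icc a b, |f₀ x - f₀ y| ≤ Cf₀ * |x - y| ^ β := Hf₀.2.1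
  have hCg₀H : ∀ x ∈ Icc a b, ∀ y ∈ Icc a b, |g₀ x - g₀ y| ≤ Cg₀ * |x - y| ^ γ := Hg₀.2.1
  have hCf₀0 : 0 ≤ Cf₀ := Hf₀.2.2.2
  have hCg₀0 : 0 ≤ Cg₀ := Hg₀.2.2.2
  -- differences
  have hdf : ∀ n, ∀ x ∈ Icc a b, ∀ y ∈ Icc a b,
      |(f n x - f₀ x) - (f n y - f₀ y)| ≤ (Kf n + Kf₀) * |x - y| ^ β := by
    intro n x hx y hy
    have h1 := hKf n x hx y hy
    have h2 := hKf₀ x hx y hy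
    have e : (f n x - f₀ x) - (f n y - f₀ y) = (f n x - f n y) - (f₀ x - f₀ y) := by ring
    rw [e]
    calc |(f n x - f n y) - (f₀ x - f₀ y)| ≤ |f n x - f n y| + |f₀ x - f₀ y| := abs_sub _ _
      _ ≤ (Kf n + Kf₀) * |x - y| ^ β := by linarith
  have hdg : ∀ n, ∀ x ∈ Icc a b, ∀ y ∈ Icc a b,
      |(g n x - g₀ x) - (g n y - g₀ y)| ≤ (Kg n + Kg₀) * |x - y| ^ γ := by
    intro n x hx y hy
    have h1 := hKg n x hx y hy
    have h2 := hKg₀ x hx y hy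
    have e : (g n x - g₀ x) - (g n y - g₀ y) = (g n x - g n y) - (g₀ x - g₀ y) := by ring
    rw [e]
    calc |(g n x - g n y) - (g₀ x - g₀ y)| ≤ |g n x - g n y| + |g₀ x - g₀ y| := abs_sub _ _
      _ ≤ (Kg n + Kg₀) * |x - y| ^ γ := by linarith
  have Hdf := fun n => holder_sSup a b β hab hβ.1 (fun x => f n x - f₀ x) _ (hdf n)
  have Hdg := fun n => holder_sSup a b γ hab hγ.1 (fun x => g n x - g₀ x) _ (hdg n)
  set Mf : ℕ → ℝ := fun n => sSup ((fun x => |f n x - f₀ x|) '' Icc a b) with hMfdef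
  set Cf : ℕ → ℝ := fun n => sSup {r : ℝ | ∃ x ∈ Icc a b, ∃ y ∈ Icc a b, x ≠ y ∧
      r = |(f n x - f₀ x) - (f n y - f₀ y)| / |x - y| ^ β} with hCfdef
  set Mg : ℕ → ℝ := fun n => sSup ((fun x => |g n x - g₀ x|) '' Icc a b) with hMgdef
  set Cg : ℕ → ℝ := fun n => sSup {r : ℝ | ∃ x ∈ Icc a b, ∃ y ∈ Icc a b, x ≠ y ∧
      r = |(g n x - g₀ x) - (g n y - g₀ y)| / |x - y| ^ γ} with hCgdef
  have hMfle : ∀ n, ∀ x ∈ Icc a b, |f n x - f₀ x| ≤ Mf n := fun n => (Hdf n).1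
  have hCfH : ∀ n, ∀ x ∈ Icc a b, ∀ y ∈ Icc a b,
      |(f n x - f₀ x) - (f n y - f₀ y)| ≤ Cf n * |x - y| ^ β := fun n => (Hdf n).2.1
  have hMgle : ∀ n, ∀ x ∈ Icc a b, |g n x - g₀ x| ≤ Mg n := fun n => (Hdg n).1
  have hCgH : ∀ n, ∀ x ∈ Icc a b, ∀ y ∈ Icc a b,
      |(g n x - g₀ x) - (g n y - g₀ y)| ≤ Cg n * |x - y| ^ γ := fun n => (Hdg n).2.1
  have hMf0 : ∀ n, 0 ≤ Mf n := fun n => (Hdf n).2.2.1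
  have hCf0 : ∀ n, 0 ≤ Cf n := fun n => (Hdf n).2.2.2
  have hMg0 : ∀ n, 0 ≤ Mg n := fun n => (Hdg n).2.2.1
  have hCg0 : ∀ n, 0 ≤ Cg n := fun n => (Hdg n).2.2.2
  -- tendsto components
  have hfconv' : Tendsto (fun n => Mf n + Cf n) atTop (𝓝 0) := hfconv
  have hgconv' : Tendsto (fun n => Mg n + Cg n) atTop (𝓝 0) := hgconv
  have hMften : Tendsto Mf atTop (𝓝 0) :=
    squeeze_zero hMf0 (fun n => le_add_of_nonneg_right (hCf0 n)) hfconv'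
  have hCften : Tendsto Cf atTop (𝓝 0) :=
    squeeze_zero hCf0 (fun n => le_add_of_nonneg_left (hMf0 n)) hfconv'
  have hMgten : Tendsto Mg atTop (𝓝 0) :=
    squeeze_zero hMg0 (fun n => le_add_of_nonneg_right (hCg0 n)) hgconv'
  have hCgten : Tendsto Cg atTop (𝓝 0) :=
    squeeze_zero hCg0 (fun n => le_add_of_nonneg_left (hMg0 n)) hgconv'
  -- Hölder constant for g n
  have hgnH : ∀ n, ∀ x ∈ Icc a b, ∀ y ∈ Icc a b,
      |g n x - g n y| ≤ (Cg n + Cg₀) * |x - y| ^ γ := by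
    intro n x hx y hy
    have h1 := hCgH n x hx y hy
    have h2 := hCg₀H x hx y hy
    have e : g n x - g n y = ((g n x - g₀ x) - (g n y - g₀ y)) + (g₀ x - g₀ y) := by ring
    rw [e]
    calc |((g n x - g₀ x) - (g n y - g₀ y)) + (g₀ x - g₀ y)|
        ≤ |(g n x - g₀ x) - (g n y - g₀ y)| + |g₀ x - g₀ y| := abs_add_le _ _
      _ ≤ (Cg n + Cg₀) * |x - y| ^ γ := by rw [add_mul]; exact add_le_add h1 h2
  set T : ℝ := ∑' j : ℕ, ((j:ℝ)+1) ^ (-(β+γ)) with hTdef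
  set Yc : ℝ := (2 * (b - a)) ^ (β + γ) * T with hYcdef
  set D₀ : ℝ := |g₀ b - g₀ a| with hD₀def
  set e : ℕ → ℝ := fun n => Mf n * (2 * Mg n + D₀) + Cf n * (Cg n + Cg₀) * Yc +
      (|f₀ a| * (2 * Mg n) + Cf₀ * Cg n * Yc) with hedef
  have he0 : Tendsto e atTop (𝓝 0) := by
    have h1 := (hMften.mul (((hMgten.const_mul 2)).add_const D₀)).add
      ((hCften.mul (hCgten.add_const Cg₀)).mul_const Yc)
    have h2 := ((hMgten.const_mul 2).const_mul (|f₀ a|)).add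
      ((hCgten.const_mul Cf₀).mul_const Yc)
    have := h1.add h2
    simpa using this
  -- key bound
  have hbound : ∀ n, |I n - I₀| ≤ e n := by
    intro n
    set u : ℕ → ℕ → ℝ := fun k i => a + (b - a) * i / (k + 1) with hu
    have hustep : ∀ k i, u k (i+1) - u k i = (b - a) / ((k:ℝ) + 1) := by
      intro k i
      simp only [hu]
      have hk : ((k:ℝ) + 1) ≠ 0 := by positivity
      push_cast
      field_simp
      ring
    have hupart : ∀ k, IsPartition a b (u k) (k+1) := by
      intro k
      have hk : ((k:ℝ) + 1) ≠ 0 := by positivity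
      refine ⟨by simp [hu], ?_, ?_⟩
      · simp only [hu]
        push_cast
        field_simp
        ring
      · intro i _
        have := hustep k i
        have hpos : (0:ℝ) < (b - a) / ((k:ℝ) + 1) := by
          apply div_pos (by linarith) (by positivity)
        rw [← sub_pos, this]
        exact hpos
    have humesh : ∀ δ > (0:ℝ), ∃ K : ℕ, ∀ k ≥ K, ∀ i < k+1, u k (i+1) - u k i ≤ δ := by
      intro δ hδ
      obtain ⟨K, hK⟩ := exists_nat_gt ((b - a)/δ)
      refine ⟨K, fun k hk i _ => ?_⟩
      rw [hustep k i, div_le_iff₀ (by positivity)]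
      have h1 : ((b - a)/δ) < (k:ℝ) + 1 := by
        refine lt_of_lt_of_le hK ?_
        have : (K:ℝ) ≤ (k:ℝ) := by exact_mod_cast hk
        linarith
      rw [div_lt_iff₀ hδ] at h1
      nlinarith
    have hSn := hI n u (fun k => k + 1) hupart humesh
    have hS0 := hI₀ u (fun k => k + 1) hupart humesh
    have habs0 : Tendsto (fun k => |riemannSum (f n) (g n) (u k) (k+1)
        - riemannSum f₀ g₀ (u k) (k+1)|) atTop (𝓝 |I n - I₀|) := (hSn.sub hS0).abs
    refine le_of_tendsto habs0 (Eventually.of_forall fun k => ?_)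
    have hdecomp : riemannSum (f n) (g n) (u k) (k+1) - riemannSum f₀ g₀ (u k) (k+1) =
        riemannSum (fun x => f n x - f₀ x) (g n) (u k) (k+1) +
        riemannSum f₀ (fun x => g n x - g₀ x) (u k) (k+1) := by
      unfold riemannSum
      rw [← Finset.sum_add_distrib, ← Finset.sum_sub_distrib]
      exact Finset.sum_congr rfl (fun i _ => by ring)
    rw [hdecomp]
    refine le_trans (abs_add_le _ _) ?_
    have hgba : |g n b - g n a| ≤ 2 * Mg n + D₀ := by
      have e1 : g n b - g n a = ((g n b - g₀ b) - (g n a - g₀ a)) + (g₀ b - g₀ a) := by ring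
      rw [e1]
      have t1 := hMgle n b memb
      have t2 := hMgle n a mema
      calc |((g n b - g₀ b) - (g n a - g₀ a)) + (g₀ b - g₀ a)|
          ≤ |(g n b - g₀ b) - (g n a - g₀ a)| + |g₀ b - g₀ a| := abs_add_le _ _
        _ ≤ (|g n b - g₀ b| + |g n a - g₀ a|) + D₀ :=
            add_le_add (abs_sub _ _) le_rfl
        _ ≤ 2 * Mg n + D₀ := by linarith
    have hgd : |(g n b - g₀ b) - (g n a - g₀ a)| ≤ 2 * Mg n := by
      have t1 := hMgle n b memb
      have t2 := hMgle n a mema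
      calc |(g n b - g₀ b) - (g n a - g₀ a)| ≤ |g n b - g₀ b| + |g n a - g₀ a| := abs_sub _ _
        _ ≤ 2 * Mg n := by linarith
    have hY1' := young_tsum β γ hβ.1 hγ.1 hβγ a b hab (fun x => f n x - f₀ x) (g n)
      (Cf n) (Cg n + Cg₀) (hCf0 n) (add_nonneg (hCg0 n) hCg₀0) (hCfH n) (hgnH n)
      (k+1) (u k) (hupart k)
    have hY1 : |riemannSum (fun x => f n x - f₀ x) (g n) (u k) (k+1)
        - (f n a - f₀ a) * (g n b - g n a)| ≤ Cf n * (Cg n + Cg₀) * Yc := by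
      rw [hYcdef]; exact hY1'
    have hY2' := young_tsum β γ hβ.1 hγ.1 hβγ a b hab f₀ (fun x => g n x - g₀ x)
      Cf₀ (Cg n) hCf₀0 (hCg0 n) hCf₀H (hCgH n) (k+1) (u k) (hupart k)
    have hY2 : |riemannSum f₀ (fun x => g n x - g₀ x) (u k) (k+1)
        - f₀ a * ((g n b - g₀ b) - (g n a - g₀ a))| ≤ Cf₀ * Cg n * Yc := by
      rw [hYcdef]; exact hY2'
    have h1 : |riemannSum (fun x => f n x - f₀ x) (g n) (u k) (k+1)| ≤
        Mf n * (2 * Mg n + D₀) + Cf n * (Cg n + Cg₀) * Yc := by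
      have hc : |(f n a - f₀ a) * (g n b - g n a)| ≤ Mf n * (2 * Mg n + D₀) := by
        rw [abs_mul]
        exact mul_le_mul (hMfle n a mema) hgba (abs_nonneg _) (hMf0 n)
      calc |riemannSum (fun x => f n x - f₀ x) (g n) (u k) (k+1)|
          = |(riemannSum (fun x => f n x - f₀ x) (g n) (u k) (k+1)
              - (f n a - f₀ a) * (g n b - g n a)) + (f n a - f₀ a) * (g n b - g n a)| := by
            congr 1; ring
        _ ≤ |riemannSum (fun x => f n x - f₀ x) (g n) (u k) (k+1)
              - (f n a - f₀ a) * (g n b - g n a)| + |(f n a - f₀ a) * (g n b - g n a)| :=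
            abs_add_le _ _
        _ ≤ Mf n * (2 * Mg n + D₀) + Cf n * (Cg n + Cg₀) * Yc := by linarith
    have h2 : |riemannSum f₀ (fun x => g n x - g₀ x) (u k) (k+1)| ≤
        |f₀ a| * (2 * Mg n) + Cf₀ * Cg n * Yc := by
      have hc : |f₀ a * ((g n b - g₀ b) - (g n a - g₀ a))| ≤ |f₀ a| * (2 * Mg n) := by
        rw [abs_mul]
        exact mul_le_mul_of_nonneg_left hgd (abs_nonneg _)
      calc |riemannSum f₀ (fun x => g n x - g₀ x) (u k) (k+1)|
          = |(riemannSum f₀ (fun x => g n x - g₀ x) (u k) (k+1)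
              - f₀ a * ((g n b - g₀ b) - (g n a - g₀ a)))
              + f₀ a * ((g n b - g₀ b) - (g n a - g₀ a))| := by
            congr 1; ring
        _ ≤ |riemannSum f₀ (fun x => g n x - g₀ x) (u k) (k+1)
              - f₀ a * ((g n b - g₀ b) - (g n a - g₀ a))|
              + |f₀ a * ((g n b - g₀ b) - (g n a - g₀ a))| := abs_add_le _ _
        _ ≤ |f₀ a| * (2 * Mg n) + Cf₀ * Cg n * Yc := by linarith
    calc |riemannSum (fun x => f n x - f₀ x) (g n) (u k) (k+1)|
          + |riemannSum f₀ (fun x => g n x - g₀ x) (u k) (k+1)|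
        ≤ (Mf n * (2 * Mg n + D₀) + Cf n * (Cg n + Cg₀) * Yc)
          + (|f₀ a| * (2 * Mg n) + Cf₀ * Cg n * Yc) := add_le_add h1 h2
      _ = e n := by rw [hedef]
  rw [tendsto_iff_dist_tendsto_zero]
  refine squeeze_zero (fun n => dist_nonneg) (fun n => ?_) he0
  rw [Real.dist_eq]
  exact hbound n
end

section
/- Let β, γ ∈ (0,1] with β + γ > 1, let f be β-Hölder and g be γ-Hölder on [a,b], and for n ≥ 1 let t_i := a + i(b−a)/n, i = 0,…,n, be the uniform partition. Then there is a constant C_{β,γ} depending only on β and γ such that |∫_a^b f dg − Σ_{i=0}^{n−1} f(t_i)(g(t_{i+1}) − g(t_i))| ≤ C_{β,γ}·[f]_β·[g]_γ·(b−a)^{β+γ}·n^{1−β−γ}. -/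
open MeasureTheory Filter Set
open scoped Topology

lemma sum_range_two_mul {M : Type*} [AddCommMonoid M] (h : ℕ → M) (m : ℕ) :
    ∑ j ∈ Finset.range (2*m), h j = ∑ i ∈ Finset.range m, (h (2*i) + h (2*i+1)) := by
  induction m with
  | zero => simp
  | succ m ih =>
      have : 2 * (m+1) = (2*m + 1) + 1 := by ring
      rw [this, Finset.sum_range_succ, Finset.sum_range_succ, ih, Finset.sum_range_succ]
      ring_nf
      rw [add_assoc]

noncomputable def unif (a b : ℝ) (m : ℕ) (i : ℕ) : ℝ := a + (i : ℝ) * (b - a) / m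

lemma unif_spacing (a b : ℝ) (m : ℕ) (hm : 0 < m) (i : ℕ) :
    unif a b m (i+1) - unif a b m i = (b - a) / m := by
  have : (m : ℝ) ≠ 0 := Nat.cast_ne_zero.mpr hm.ne'
  simp only [unif, Nat.cast_add, Nat.cast_one]
  field_simp
  ring

lemma unif_double (a b : ℝ) (m : ℕ) (hm : 0 < m) (i : ℕ) :
    unif a b (2*m) (2*i) = unif a b m i := by
  have : (m : ℝ) ≠ 0 := Nat.cast_ne_zero.mpr hm.ne'
  simp only [unif, Nat.cast_mul, Nat.cast_ofNat]
  field_simp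

lemma unif_mem (a b : ℝ) (hab : a < b) (m : ℕ) (hm : 0 < m) (i : ℕ) (hi : i ≤ m) :
    unif a b m i ∈ Icc a b := by
  have hm' : (0:ℝ) < m := Nat.cast_pos.mpr hm
  have hba : (0:ℝ) < b - a := sub_pos.mpr hab
  constructor
  · have : 0 ≤ (i : ℝ) * (b - a) / m := by positivity
    simp [unif]; linarith
  · have h1 : (i : ℝ) ≤ m := Nat.cast_le.mpr hi
    have : (i : ℝ) * (b - a) / m ≤ (b - a) := by
      rw [div_le_iff₀ hm']
      nlinarith
    simp [unif]; linarith

lemma double_bound (a b : ℝ) (hab : a < b) (f g : ℝ → ℝ) (Kf Kg β γ : ℝ)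
    (hKf : 0 ≤ Kf) (hKg : 0 ≤ Kg)
    (hf : ∀ x ∈ Icc a b, ∀ y ∈ Icc a b, |f x - f y| ≤ Kf * |x - y| ^ β)
    (hg : ∀ x ∈ Icc a b, ∀ y ∈ Icc a b, |g x - g y| ≤ Kg * |x - y| ^ γ)
    (m : ℕ) (hm : 0 < m) :
    |riemannSum f g (unif a b (2*m)) (2*m) - riemannSum f g (unif a b m) m|
      ≤ (m : ℝ) * (Kf * Kg * ((b - a)/(2*m)) ^ (β + γ)) := by
  have h2m : 0 < 2*m := by omega
  set v := unif a b (2*m) with hv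
  have hspace : ∀ i : ℕ, v (i+1) - v i = (b-a)/(2*m) := fun i => by
    simpa using unif_spacing a b (2*m) h2m i
  have hba : (0:ℝ) < b - a := sub_pos.mpr hab
  have hd : (0:ℝ) < (b-a)/(2*m) := by
    have h2 : (0:ℝ) < (2*m : ℕ) := Nat.cast_pos.mpr h2m
    push_cast at h2 ⊢
    positivity
  have key : riemannSum f g v (2*m) - riemannSum f g (unif a b m) m
      = ∑ i ∈ Finset.range m, (f (v (2*i+1)) - f (v (2*i))) * (g (v (2*i+2)) - g (v (2*i+1))) := by
    unfold riemannSum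
    rw [sum_range_two_mul, ← Finset.sum_sub_distrib]
    refine Finset.sum_congr rfl fun i _ => ?_
    have e1 : unif a b m i = v (2*i) := (unif_double a b m hm i).symm
    have e2 : unif a b m (i+1) = v (2*i+2) := by
      have := (unif_double a b m hm (i+1)).symm
      rw [this]; norm_num [hv]; ring_nf
    rw [e1, e2]
    ring
  rw [key]
  calc |∑ i ∈ Finset.range m, (f (v (2*i+1)) - f (v (2*i))) * (g (v (2*i+2)) - g (v (2*i+1)))|
      ≤ ∑ i ∈ Finset.range m, |(f (v (2*i+1)) - f (v (2*i))) * (g (v (2*i+2)) - g (v (2*i+1)))| :=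
        Finset.abs_sum_le_sum_abs _ _
    _ ≤ ∑ i ∈ Finset.range m, Kf * Kg * ((b-a)/(2*m)) ^ (β + γ) := by
        refine Finset.sum_le_sum fun i hi => ?_
        have him : i < m := Finset.mem_range.mp hi
        have mem1 : v (2*i) ∈ Icc a b := unif_mem a b hab (2*m) h2m _ (by omega)
        have mem2 : v (2*i+1) ∈ Icc a b := unif_mem a b hab (2*m) h2m _ (by omega)
        have mem3 : v (2*i+2) ∈ Icc a b := unif_mem a b hab (2*m) h2m _ (by omega)
        rw [abs_mul]
        have h1 : |f (v (2*i+1)) - f (v (2*i))| ≤ Kf * ((b-a)/(2*m)) ^ β := by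
          have := hf _ mem2 _ mem1
          rwa [show v (2*i+1) - v (2*i) = (b-a)/(2*m) from hspace (2*i),
            abs_of_pos hd] at this
        have h2 : |g (v (2*i+2)) - g (v (2*i+1))| ≤ Kg * ((b-a)/(2*m)) ^ γ := by
          have := hg _ mem3 _ mem2
          rwa [show v (2*i+2) - v (2*i+1) = (b-a)/(2*m) from hspace (2*i+1),
            abs_of_pos hd] at this
        calc |f (v (2*i+1)) - f (v (2*i))| * |g (v (2*i+2)) - g (v (2*i+1))|
            ≤ (Kf * ((b-a)/(2*m)) ^ β) * (Kg * ((b-a)/(2*m)) ^ γ) := by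
              exact mul_le_mul h1 h2 (abs_nonneg _) (by positivity)
          _ = Kf * Kg * ((b-a)/(2*m)) ^ (β + γ) := by
              rw [Real.rpow_add hd]; ring
    _ = (m : ℝ) * (Kf * Kg * ((b-a)/(2*m)) ^ (β + γ)) := by
        rw [Finset.sum_const, Finset.card_range, nsmul_eq_mul]

/-- Quantitative error bound for the approximation of the Young integral
`∫_a^b f dg` by the left-endpoint Riemann sum over the uniform partition
`t_i = a + i(b-a)/n`: the error is at most
`C_{β,γ}·[f]_β·[g]_γ·(b−a)^{β+γ}·n^{1−β−γ}` with `C_{β,γ}` depending only on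
`β` and `γ`. -/
theorem stmt5 (β γ : ℝ) (hβ : β ∈ Ioc (0 : ℝ) 1) (hγ : γ ∈ Ioc (0 : ℝ) 1)
    (hβγ : 1 < β + γ) :
    ∃ C : ℝ, 0 < C ∧
      ∀ (a b : ℝ), a < b →
        ∀ (f g : ℝ → ℝ) (Kf Kg : ℝ), 0 ≤ Kf → 0 ≤ Kg →
          (∀ x ∈ Icc a b, ∀ y ∈ Icc a b, |f x - f y| ≤ Kf * |x - y| ^ β) →
          (∀ x ∈ Icc a b, ∀ y ∈ Icc a b, |g x - g y| ≤ Kg * |x - y| ^ γ) →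
          ∀ I : ℝ, IsYoungIntegral a b f g I →
            ∀ n : ℕ, 0 < n →
              |I - riemannSum f g (fun i : ℕ => a + (i : ℝ) * (b - a) / (n : ℝ)) n|
                ≤ C * Kf * Kg * (b - a) ^ (β + γ) * (n : ℝ) ^ (1 - β - γ) := by
  set s := β + γ with hs
  set r : ℝ := 2 ^ (1 - s) with hr
  have hrpos : 0 < r := Real.rpow_pos_of_pos (by norm_num) _
  have hrlt : r < 1 := Real.rpow_lt_one_of_one_lt_of_neg (by norm_num) (by linarith)
  refine ⟨(1 - r)⁻¹, inv_pos.mpr (by linarith), ?_⟩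
  intro a b hab f g Kf Kg hKf hKg hf hg I hI n hn
  have hba : (0:ℝ) < b - a := sub_pos.mpr hab
  set D : ℝ := Kf * Kg * (b - a) ^ s with hD
  have hD0 : 0 ≤ D := by positivity
  -- step bound in nicer form
  have step : ∀ m : ℕ, 0 < m →
      |riemannSum f g (unif a b (2*m)) (2*m) - riemannSum f g (unif a b m) m|
        ≤ D * (m : ℝ) ^ (1 - s) := by
    intro m hm
    refine (double_bound a b hab f g Kf Kg β γ hKf hKg hf hg m hm).trans ?_
    have hm' : (0:ℝ) < m := Nat.cast_pos.mpr hm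
    have h2m' : (0:ℝ) < 2*m := by positivity
    have e1 : ((b-a)/(2*(m:ℝ))) ^ s = (b-a) ^ s * ((2*(m:ℝ)) ^ s)⁻¹ := by
      rw [Real.div_rpow hba.le h2m'.le, div_eq_mul_inv]
    have e2 : ((2*(m:ℝ)) ^ s)⁻¹ ≤ ((m:ℝ) ^ s)⁻¹ := by
      have h1 : (m:ℝ) ^ s ≤ (2*(m:ℝ)) ^ s :=
        Real.rpow_le_rpow hm'.le (by linarith) (by linarith)
      exact inv_anti₀ (Real.rpow_pos_of_pos hm' _) h1
    have e3 : (m:ℝ) * ((m:ℝ) ^ s)⁻¹ = (m:ℝ) ^ (1 - s) := by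
      have : (m:ℝ) * ((m:ℝ)^s)⁻¹ = (m:ℝ)^(1:ℝ) * (m:ℝ)^(-s) := by
        rw [Real.rpow_one, Real.rpow_neg hm'.le]
      rw [this, ← Real.rpow_add hm', sub_eq_add_neg]
    calc (m:ℝ) * (Kf * Kg * ((b-a)/(2*(m:ℝ))) ^ s)
        ≤ (m:ℝ) * (Kf * Kg * ((b-a)^s * ((m:ℝ) ^ s)⁻¹)) := by
          rw [e1]
          have : (b-a)^s * ((2*(m:ℝ))^s)⁻¹ ≤ (b-a)^s * ((m:ℝ)^s)⁻¹ :=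
            mul_le_mul_of_nonneg_left e2 (by positivity)
          nlinarith [mul_le_mul_of_nonneg_left this (mul_nonneg hKf hKg), hm']
      _ = D * (m : ℝ) ^ (1 - s) := by rw [← e3, hD]; ring
  set S : ℕ → ℝ := fun k => riemannSum f g (unif a b (n * 2^k)) (n * 2^k) with hS
  have hnk : ∀ k : ℕ, 0 < n * 2^k := fun k => by positivity
  have hn' : (0:ℝ) < n := Nat.cast_pos.mpr hn
  have step' : ∀ k : ℕ, |S (k+1) - S k| ≤ D * (n:ℝ) ^ (1 - s) * r ^ k := by
    intro k
    have e : n * 2^(k+1) = 2 * (n * 2^k) := by ring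
    have h1 : |S (k+1) - S k| ≤ D * ((n * 2^k : ℕ) : ℝ) ^ (1 - s) := by
      have := step (n * 2^k) (hnk k)
      simpa [hS, e] using this
    refine h1.trans (le_of_eq ?_)
    have h2 : ((n * 2^k : ℕ) : ℝ) = (n:ℝ) * (2:ℝ)^k := by push_cast; ring
    have h3 : ((2:ℝ)^k) ^ (1-s) = r ^ k := by
      rw [← Real.rpow_natCast 2 k, ← Real.rpow_mul (by norm_num),
        mul_comm (k:ℝ), Real.rpow_mul (by norm_num), Real.rpow_natCast]
    rw [h2, Real.mul_rpow hn'.le (by positivity), h3]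
    ring
  have geom : ∀ K : ℕ, ∑ k ∈ Finset.range K, r ^ k ≤ (1 - r)⁻¹ := by
    intro K
    rw [← tsum_geometric_of_lt_one hrpos.le hrlt]
    exact Summable.sum_le_tsum _ (fun i _ => by positivity)
      (summable_geometric_of_lt_one hrpos.le hrlt)
  have tele : ∀ K : ℕ, |S K - S 0| ≤ D * (n:ℝ) ^ (1 - s) * (1 - r)⁻¹ := by
    intro K
    have e : S K - S 0 = ∑ k ∈ Finset.range K, (S (k+1) - S k) :=
      (Finset.sum_range_sub S K).symm
    rw [e]
    calc |∑ k ∈ Finset.range K, (S (k+1) - S k)|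
        ≤ ∑ k ∈ Finset.range K, |S (k+1) - S k| := Finset.abs_sum_le_sum_abs _ _
      _ ≤ ∑ k ∈ Finset.range K, D * (n:ℝ) ^ (1 - s) * r ^ k :=
          Finset.sum_le_sum fun k _ => step' k
      _ = D * (n:ℝ) ^ (1 - s) * ∑ k ∈ Finset.range K, r ^ k := by
          rw [Finset.mul_sum]
      _ ≤ D * (n:ℝ) ^ (1 - s) * (1 - r)⁻¹ := by
          refine mul_le_mul_of_nonneg_left (geom K) (by positivity)
  have conv : Tendsto S atTop (𝓝 I) := by
    refine hI (fun k => unif a b (n * 2^k)) (fun k => n * 2^k) ?_ ?_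
    · intro k
      refine ⟨by simp [unif], ?_, ?_⟩
      · have : ((n * 2^k : ℕ) : ℝ) ≠ 0 := Nat.cast_ne_zero.mpr (hnk k).ne'
        simp only [unif]
        field_simp
        ring
      · intro i _
        have hsp := unif_spacing a b (n * 2^k) (hnk k) i
        have hpos : (0:ℝ) < (b - a) / ((n * 2^k : ℕ):ℝ) :=
          div_pos hba (Nat.cast_pos.mpr (hnk k))
        linarith [hsp, hpos]
    · intro δ hδ
      refine ⟨⌈(b - a)/δ⌉₊, fun k hk i _ => ?_⟩
      have h1 : (b - a)/δ ≤ (k:ℝ) := le_trans (Nat.le_ceil _) (by exact_mod_cast hk)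
      have h2 : (k:ℝ) ≤ ((n * 2^k : ℕ):ℝ) := by
        have : k ≤ n * 2^k :=
          le_trans (Nat.lt_two_pow_self (n := k)).le (Nat.le_mul_of_pos_left _ hn)
        exact_mod_cast this
      have h3 : (b - a)/δ ≤ ((n * 2^k : ℕ):ℝ) := h1.trans h2
      have hm : (0:ℝ) < ((n * 2^k : ℕ):ℝ) := Nat.cast_pos.mpr (hnk k)
      have hsp := unif_spacing a b (n * 2^k) (hnk k) i
      rw [hsp, div_le_iff₀ hm]
      rw [div_le_iff₀ hδ] at h3
      nlinarith
  have lim : Tendsto (fun K => |S K - S 0|) atTop (𝓝 |I - S 0|) :=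
    (conv.sub tendsto_const_nhds).abs
  have hfin : |I - S 0| ≤ D * (n:ℝ) ^ (1 - s) * (1 - r)⁻¹ := le_of_tendsto' lim tele
  have hS0 : S 0 = riemannSum f g (fun i : ℕ => a + (i:ℝ) * (b - a) / (n:ℝ)) n := by
    simp [hS, unif, riemannSum]
  rw [hS0] at hfin
  refine hfin.trans (le_of_eq ?_)
  rw [hD, show (1:ℝ) - β - γ = 1 - s by rw [hs]; ring]; ring
end

section
/- Let t > 0, let b : [0,t] → ℝ be continuous, and let ℓ : ℝ → ℝ be a γ-Hölder continuous function (γ ∈ (0,1]) with compact support contained in the open interval (−M, M), satisfying the occupation density formula ∫_0^t φ(b_s) ds = ∫_ℝ φ(y)·ℓ(y) dy for every bounded Borel measurable φ : ℝ → ℝ. Let a : ℝ → ℝ be continuous, let α ∈ (0,1), ε > 0, and define W(y) := ε^{−α/2}·∫_0^y a(z/ε) dz. Then the Young integral of ℓ against W over [−M, M] satisfies ∫_{−M}^{M} ℓ dW = ε^{−α/2}·∫_0^t a(b_s/ε) ds. -/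
open MeasureTheory Filter Set
open scoped Topology

/-- Occupation-time representation of the Feynman–Kac functional: if `ℓ` is a
`γ`-Hölder occupation density of the continuous path `b` on `[0,t]`, compactly
supported in `(-M, M)`, and `W(y) = ε^{-α/2} ∫_0^y a(z/ε) dz` for a continuous
potential `a`, then the Young integral of `ℓ` against `W` over `[-M, M]` equals
`ε^{-α/2} ∫_0^t a(b_s/ε) ds`. -/
theorem stmt7 (t : ℝ) (ht : 0 < t) (b : ℝ → ℝ) (hb : ContinuousOn b (Icc 0 t))
    (γ : ℝ) (hγ : γ ∈ Ioc (0 : ℝ) 1) (M : ℝ) (hM : 0 < M)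
    (ℓ : ℝ → ℝ) (hℓ : ∃ K : ℝ, ∀ x y : ℝ, |ℓ x - ℓ y| ≤ K * |x - y| ^ γ)
    (hsupp : ∀ y : ℝ, y ∉ Ioo (-M) M → ℓ y = 0)
    (hocc : ∀ φ : ℝ → ℝ, Measurable φ → (∃ Cφ : ℝ, ∀ x, |φ x| ≤ Cφ) →
      ∫ s in (0 : ℝ)..t, φ (b s) = ∫ y : ℝ, φ y * ℓ y)
    (a : ℝ → ℝ) (ha : Continuous a)
    (α : ℝ) (hα : α ∈ Ioo (0 : ℝ) 1) (ε : ℝ) (hε : 0 < ε)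
    (W : ℝ → ℝ) (hW : ∀ y, W y = ε ^ (-(α / 2)) * ∫ z in (0 : ℝ)..y, a (z / ε)) :
    IsYoungIntegral (-M) M ℓ W (ε ^ (-(α / 2)) * ∫ s in (0 : ℝ)..t, a (b s / ε)) := by
  obtain ⟨K, hK⟩ := hℓ
  have hγ0 : (0 : ℝ) < γ := hγ.1
  have hK0 : 0 ≤ K := by
    have h := hK 0 1
    have h1 : |(0 : ℝ) - 1| ^ γ = 1 := by
      norm_num
    rw [h1, mul_one] at h
    exact le_trans (abs_nonneg _) h
  -- continuity of ℓ
  have hℓcont : Continuous ℓ := by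
    rw [continuous_iff_continuousAt]
    intro x
    have habs : Tendsto (fun y : ℝ => |y - x|) (𝓝 x) (𝓝 0) := by
      have hc : Continuous fun y : ℝ => |y - x| := (continuous_id.sub continuous_const).abs
      simpa using hc.tendsto x
    have hrpow : Tendsto (fun z : ℝ => z ^ γ) (𝓝 0) (𝓝 0) := by
      have hc := Real.continuousAt_rpow_const 0 γ (Or.inr hγ0.le)
      simpa [Real.zero_rpow hγ0.ne'] using hc.tendsto
    have h0 : Tendsto (fun y => ℓ y - ℓ x) (𝓝 x) (𝓝 0) := by
      have h2 : Tendsto (fun y : ℝ => K * |y - x| ^ γ) (𝓝 x) (𝓝 0) := by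
        simpa using (hrpow.comp habs).const_mul K
      exact squeeze_zero_norm (fun y => by simpa [Real.norm_eq_abs] using hK y x) h2
    have h3 := h0.add_const (ℓ x)
    exact (by simpa using h3 : Tendsto ℓ (𝓝 x) (𝓝 (ℓ x)))
  set c : ℝ := ε ^ (-(α / 2)) with hc
  have hacont : Continuous fun s : ℝ => a (s / ε) := ha.comp (continuous_id.div_const ε)
  have hg : Continuous fun s : ℝ => c * a (s / ε) := continuous_const.mul hacont
  set g : ℝ → ℝ := fun s => c * a (s / ε) with hgdef
  obtain ⟨C, hC⟩ :=
    (isCompact_Icc (a := -M) (b := M)).exists_bound_of_continuousOn hg.continuousOn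
  have hC0 : 0 ≤ C := le_trans (norm_nonneg _) (hC 0 ⟨by linarith, by linarith⟩)
  -- the occupation identity
  obtain ⟨B, hB⟩ := (isCompact_Icc (a := (0 : ℝ)) (b := t)).exists_bound_of_continuousOn hb
  set R : ℝ := max M B with hR
  have hMR : M ≤ R := le_max_left _ _
  have hBR : B ≤ R := le_max_right _ _
  have hR0 : 0 < R := lt_of_lt_of_le hM hMR
  set φ : ℝ → ℝ := fun y => a (max (-R) (min R y) / ε) with hφ
  have hφcont : Continuous φ :=
    ha.comp ((continuous_const.max (continuous_const.min continuous_id)).div_const ε)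
  have hclamp : ∀ y : ℝ, |y| ≤ R → φ y = a (y / ε) := by
    intro y hy
    have h1 : min R y = y := min_eq_right (abs_le.mp hy).2
    rw [hφ]
    simp only [h1]
    rw [max_eq_right (abs_le.mp hy).1]
  obtain ⟨Ca, hCa⟩ := (isCompact_Icc (a := -R) (b := R)).exists_bound_of_continuousOn
    hacont.continuousOn
  have hφbdd : ∀ y, |φ y| ≤ Ca := by
    intro y
    have hmem : max (-R) (min R y) ∈ Icc (-R) R := by
      constructor
      · exact le_max_left _ _
      · exact max_le (by linarith) (min_le_left _ _)
    simpa [Real.norm_eq_abs, hφ] using hCa _ hmem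
  have hocc' := hocc φ hφcont.measurable ⟨Ca, hφbdd⟩
  have hL : ∫ s in (0 : ℝ)..t, φ (b s) = ∫ s in (0 : ℝ)..t, a (b s / ε) := by
    apply intervalIntegral.integral_congr
    intro s hs
    rw [uIcc_of_le ht.le] at hs
    exact hclamp _ (le_trans (by simpa [Real.norm_eq_abs] using hB s hs) hBR)
  set I₀ : ℝ := ∫ y in (-M)..M, ℓ y * g y with hI₀
  have hI_eq : c * ∫ s in (0 : ℝ)..t, a (b s / ε) = I₀ := by
    rw [← hL, hocc']
    have h1 : ∫ y : ℝ, φ y * ℓ y = ∫ y in Ioc (-M) M, φ y * ℓ y := by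
      symm
      apply setIntegral_eq_integral_of_forall_compl_eq_zero
      intro y hy
      have hy' : y ∉ Ioo (-M) M := fun h => hy ⟨h.1, h.2.le⟩
      rw [hsupp y hy', mul_zero]
    rw [h1, ← intervalIntegral.integral_of_le (by linarith : -M ≤ M),
      ← intervalIntegral.integral_const_mul, hI₀]
    apply intervalIntegral.integral_congr
    intro y hy
    rw [uIcc_of_le (by linarith : -(M : ℝ) ≤ M)] at hy
    have h2 : φ y = a (y / ε) := hclamp y (le_trans (abs_le.mpr ⟨hy.1, hy.2⟩) hMR)
    simp only [hgdef, h2]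
    ring
  intro T N hpart hmesh
  rw [show ε ^ (-(α / 2)) * ∫ s in (0 : ℝ)..t, a (b s / ε) = I₀ from hI_eq]
  have hint_a : ∀ u v : ℝ, IntervalIntegrable (fun s => a (s / ε)) volume u v :=
    fun u v => hacont.intervalIntegrable u v
  have hWd : ∀ u v : ℝ, W v - W u = ∫ s in u..v, g s := by
    intro u v
    rw [hW v, hW u, ← mul_sub,
      intervalIntegral.integral_interval_sub_left (hint_a 0 v) (hint_a 0 u),
      ← intervalIntegral.integral_const_mul]
  have hF : Continuous fun s => ℓ s * g s := hℓcont.mul hg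
  have key : ∀ k : ℕ, ∀ δ : ℝ, 0 < δ → (∀ i < N k, T k (i + 1) - T k i ≤ δ) →
      |riemannSum ℓ W (T k) (N k) - I₀| ≤ K * C * (2 * M) * δ ^ γ := by
    intro k δ hδ hδk
    obtain ⟨hp0, hpn, hplt⟩ := hpart k
    set p := T k with hp
    set n := N k with hn
    have hmono : ∀ j, j ≤ n → ∀ i, i ≤ j → p i ≤ p j := by
      intro j
      induction j with
      | zero => intro _ i hi; interval_cases i; exact le_rfl
      | succ j ih =>
        intro hj i hi
        rcases eq_or_lt_of_le hi with h | h
        · rw [h]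
        · exact le_trans (ih (by omega) i (by omega)) (hplt j (by omega)).le
    have hbound : ∀ i, i ≤ n → p i ∈ Icc (-M) M := by
      intro i hi
      constructor
      · rw [← hp0]; exact hmono i hi 0 (Nat.zero_le _)
      · rw [← hpn]; exact hmono n le_rfl i hi
    have hsum : I₀ = ∑ i ∈ Finset.range n, ∫ s in p i..p (i + 1), ℓ s * g s := by
      rw [intervalIntegral.sum_integral_adjacent_intervals
        (fun i _ => hF.intervalIntegrable _ _), hp0, hpn, hI₀]
    have hdiff : riemannSum ℓ W p n - I₀ =
        ∑ i ∈ Finset.range n, ∫ s in p i..p (i + 1), (ℓ (p i) - ℓ s) * g s := by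
      rw [hsum, riemannSum, ← Finset.sum_sub_distrib]
      apply Finset.sum_congr rfl
      intro i _
      rw [hWd, ← intervalIntegral.integral_const_mul,
        ← intervalIntegral.integral_sub (f := fun s => ℓ (p i) * g s) ((continuous_const.mul hg).intervalIntegrable _ _)
          (hF.intervalIntegrable _ _)]
      apply intervalIntegral.integral_congr
      intro s _
      ring
    have hterm : ∀ i < n, |∫ s in p i..p (i + 1), (ℓ (p i) - ℓ s) * g s| ≤
        K * δ ^ γ * C * (p (i + 1) - p i) := by
      intro i hi
      have hle : p i ≤ p (i + 1) := (hplt i hi).le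
      have h1 : ∀ s ∈ uIoc (p i) (p (i + 1)), ‖(ℓ (p i) - ℓ s) * g s‖ ≤ K * δ ^ γ * C := by
        intro s hs
        rw [uIoc_of_le hle] at hs
        have hsI : s ∈ Icc (-M) M :=
          ⟨le_trans (hbound i (by omega)).1 hs.1.le,
            le_trans hs.2 (hbound (i + 1) (by omega)).2⟩
        have h2 : |ℓ (p i) - ℓ s| ≤ K * δ ^ γ := by
          refine le_trans (hK (p i) s) (mul_le_mul_of_nonneg_left ?_ hK0)
          apply Real.rpow_le_rpow (abs_nonneg _) ?_ hγ0.le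
          rw [abs_sub_comm, abs_of_nonneg (by linarith [hs.1] : (0 : ℝ) ≤ s - p i)]
          linarith [hδk i hi, hs.2]
        have h3 : ‖g s‖ ≤ C := hC s hsI
        rw [Real.norm_eq_abs, abs_mul]
        refine mul_le_mul h2 (by simpa [Real.norm_eq_abs] using h3) (abs_nonneg _) ?_
        exact mul_nonneg hK0 (Real.rpow_nonneg hδ.le γ)
      have h4 := intervalIntegral.norm_integral_le_of_norm_le_const h1
      rw [Real.norm_eq_abs, abs_of_nonneg (by linarith : (0 : ℝ) ≤ p (i + 1) - p i)] at h4
      exact h4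
    rw [hdiff]
    calc |∑ i ∈ Finset.range n, ∫ s in p i..p (i + 1), (ℓ (p i) - ℓ s) * g s|
        ≤ ∑ i ∈ Finset.range n, |∫ s in p i..p (i + 1), (ℓ (p i) - ℓ s) * g s| :=
          Finset.abs_sum_le_sum_abs _ _
      _ ≤ ∑ i ∈ Finset.range n, K * δ ^ γ * C * (p (i + 1) - p i) :=
          Finset.sum_le_sum fun i hi => hterm i (Finset.mem_range.mp hi)
      _ = K * δ ^ γ * C * ∑ i ∈ Finset.range n, (p (i + 1) - p i) := by
          rw [← Finset.mul_sum]
      _ = K * δ ^ γ * C * (2 * M) := by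
          rw [Finset.sum_range_sub, hp0, hpn]; ring
      _ = K * C * (2 * M) * δ ^ γ := by ring
  rw [Metric.tendsto_atTop]
  intro η hη
  set D : ℝ := K * C * (2 * M) with hD
  have hD0 : 0 ≤ D := by
    apply mul_nonneg (mul_nonneg hK0 hC0); linarith
  set σ : ℝ := η / (D + 1) with hσdef
  have hσ : 0 < σ := div_pos hη (by linarith)
  set δ : ℝ := σ ^ γ⁻¹ with hδdef
  have hδpos : 0 < δ := Real.rpow_pos_of_pos hσ _
  have hδγ : δ ^ γ = σ := Real.rpow_inv_rpow hσ.le hγ0.ne'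
  obtain ⟨K₀, hK₀⟩ := hmesh δ hδpos
  refine ⟨K₀, fun k hk => ?_⟩
  rw [Real.dist_eq]
  calc |riemannSum ℓ W (T k) (N k) - I₀| ≤ D * δ ^ γ := key k δ hδpos (hK₀ k hk)
    _ = D * σ := by rw [hδγ]
    _ < (D + 1) * σ := by apply mul_lt_mul_of_pos_right (by linarith) hσ
    _ = η := by rw [hσdef, mul_div_cancel₀ _ (by linarith : D + 1 ≠ 0)]
end

section
/- Let α ∈ (0,1), κ > 0, and set H := 1 − α/2. Let R : ℝ → ℝ be measurable with |R(z)| ≤ min(1, C·|z|^{−α}) for all z ≠ 0 (for some constant C > 0) and lim_{|z|→∞} |z|^α·R(z) = κ. Then for all x, y ≥ 0: lim_{ε→0⁺} ε^{2H}·∫_0^{x/ε} ∫_0^{y/ε} R(u−v) du dv = (κ/(H(2H−1)))·(1/2)·(x^{2H} + y^{2H} − |x−y|^{2H}). -/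
open MeasureTheory Filter Set intervalIntegral
open scoped Topology

lemma absRpowII {r : ℝ} (hr : -1 < r) (a b : ℝ) :
    IntervalIntegrable (fun u => |u| ^ r) volume a b := by
  suffices h : ∀ c : ℝ, 0 ≤ c → IntervalIntegrable (fun u => |u| ^ r) volume 0 c by
    have h' : ∀ c : ℝ, IntervalIntegrable (fun u => |u| ^ r) volume 0 c := by
      intro c
      rcases le_total 0 c with hc | hc
      · exact h c hc
      · rw [IntervalIntegrable.iff_comp_neg]
        simpa using h (-c) (by linarith)
    exact (h' a).symm.trans (h' b)
  intro c hc
  have := intervalIntegrable_rpow' (a := 0) (b := c) hr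
  rw [intervalIntegrable_iff, uIoc_of_le hc] at this ⊢
  exact this.congr_fun (fun u hu => by rw [abs_of_pos hu.1]) measurableSet_Ioc

lemma absRpowInt {α : ℝ} (hα0 : 0 < α) (hα1 : α < 1) :
    ∀ c : ℝ, ∫ u in (0:ℝ)..c, |u| ^ (-α) = Real.sign c * |c| ^ (1 - α) / (1 - α) := by
  have hβ : (0:ℝ) < 1 - α := by linarith
  have hnonneg : ∀ c : ℝ, 0 ≤ c → ∫ u in (0:ℝ)..c, |u| ^ (-α) = c ^ (1 - α) / (1 - α) := by
    intro c hc
    have : ∫ u in (0:ℝ)..c, |u| ^ (-α) = ∫ u in (0:ℝ)..c, u ^ (-α) := by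
      apply intervalIntegral.integral_congr
      intro u hu
      rw [uIcc_of_le hc] at hu
      show |u| ^ (-α) = u ^ (-α)
      rw [abs_of_nonneg hu.1]
    rw [this, integral_rpow (Or.inl (by linarith))]
    rw [Real.zero_rpow (by linarith : -α + 1 ≠ 0)]
    ring_nf
  intro c
  rcases lt_trichotomy c 0 with hc | hc | hc
  · have key : ∫ u in (0:ℝ)..(-c), |(-u)| ^ (-α) = ∫ u in (c:ℝ)..0, |u| ^ (-α) := by
      simpa using intervalIntegral.integral_comp_neg (a := 0) (b := -c) (fun u => |u| ^ (-α))
    have h1 : ∫ u in (0:ℝ)..(-c), |(-u)| ^ (-α) = (-c) ^ (1 - α) / (1 - α) := by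
      simp only [abs_neg]
      exact hnonneg (-c) (by linarith)
    have h2 : ∫ u in (0:ℝ)..c, |u| ^ (-α) = -∫ u in (c:ℝ)..0, |u| ^ (-α) := by
      rw [intervalIntegral.integral_symm]
    rw [h2, ← key, h1, Real.sign_of_neg hc, abs_of_neg hc]
    ring
  · simp [hc]
  · rw [hnonneg c hc.le, Real.sign_of_pos hc, abs_of_pos hc, one_mul]

noncomputable def Gfn (α : ℝ) (c : ℝ) : ℝ := Real.sign c * |c| ^ (1 - α) / (1 - α)

lemma Gfn_continuous {α : ℝ} (hα0 : 0 < α) (hα1 : α < 1) : Continuous (Gfn α) := by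
  have hβ : (0:ℝ) < 1 - α := by linarith
  have heq : Gfn α = fun c => ((max c 0) ^ (1 - α) - (max (-c) 0) ^ (1 - α)) / (1 - α) := by
    funext c
    rcases lt_trichotomy c 0 with hc | hc | hc
    · rw [Gfn, Real.sign_of_neg hc, abs_of_neg hc, max_eq_right hc.le,
        max_eq_left (by linarith : (0:ℝ) ≤ -c), Real.zero_rpow hβ.ne']
      ring
    · simp [Gfn, hc, Real.zero_rpow hβ.ne']
    · rw [Gfn, Real.sign_of_pos hc, abs_of_pos hc, max_eq_left hc.le,
        max_eq_right (by linarith : -c ≤ (0:ℝ)), Real.zero_rpow hβ.ne']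
      ring
  rw [heq]
  have hrpow : Continuous fun t : ℝ => t ^ (1 - α) :=
    continuous_iff_continuousAt.2 fun t => Real.continuousAt_rpow_const t _ (Or.inr hβ.le)
  exact (((hrpow.comp (continuous_id.max continuous_const)).sub
    (hrpow.comp (continuous_neg.max continuous_const))).div_const _)

lemma Gfn_odd (α : ℝ) (c : ℝ) : Gfn α (-c) = -Gfn α c := by
  rw [Gfn, Gfn, Real.sign_neg, abs_neg]; ring

/-- integral of |u|^(-α) from a to b -/
lemma absRpowInt' {α : ℝ} (hα0 : 0 < α) (hα1 : α < 1) (a b : ℝ) :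
    ∫ u in a..b, |u| ^ (-α) = Gfn α b - Gfn α a := by
  have hint : ∀ c : ℝ, ∫ u in (0:ℝ)..c, |u| ^ (-α) = Gfn α c := absRpowInt hα0 hα1
  have h := intervalIntegral.integral_add_adjacent_intervals
    (absRpowII (by linarith : (-1:ℝ) < -α) a 0) (absRpowII (by linarith : (-1:ℝ) < -α) 0 b)
  rw [← h, intervalIntegral.integral_symm, hint, hint]
  ring

lemma Gfn_int {α : ℝ} (hα0 : 0 < α) (hα1 : α < 1) :
    ∀ c : ℝ, ∫ u in (0:ℝ)..c, Gfn α u = |c| ^ (2 - α) / ((1 - α) * (2 - α)) := by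
  have hβ : (0:ℝ) < 1 - α := by linarith
  have hβ2 : (0:ℝ) < 2 - α := by linarith
  have hcont := Gfn_continuous hα0 hα1
  have hnonneg : ∀ c : ℝ, 0 ≤ c → ∫ u in (0:ℝ)..c, Gfn α u = c ^ (2 - α) / ((1 - α) * (2 - α)) := by
    intro c hc
    have heq : ∫ u in (0:ℝ)..c, Gfn α u = ∫ u in (0:ℝ)..c, u ^ (1 - α) / (1 - α) := by
      apply intervalIntegral.integral_congr
      intro u hu
      rw [uIcc_of_le hc] at hu
      rcases eq_or_lt_of_le hu.1 with h0 | h0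
      · show Gfn α u = u ^ (1 - α) / (1 - α)
        rw [← h0]
        simp [Gfn, Real.zero_rpow hβ.ne']
      · show Gfn α u = u ^ (1 - α) / (1 - α)
        rw [Gfn, Real.sign_of_pos h0, abs_of_pos h0, one_mul]
    rw [heq, intervalIntegral.integral_div, integral_rpow (Or.inl (by linarith))]
    rw [Real.zero_rpow (by linarith : (1 - α) + 1 ≠ 0)]
    rw [show (1 - α) + 1 = 2 - α by ring, sub_zero, div_div, mul_comm (2 - α) (1 - α)]
  intro c
  rcases le_total 0 c with hc | hc
  · rw [hnonneg c hc, abs_of_nonneg hc]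
  · have key : ∫ u in (0:ℝ)..(-c), Gfn α (-u) = ∫ u in (c:ℝ)..0, Gfn α u := by
      simpa using intervalIntegral.integral_comp_neg (a := 0) (b := -c) (Gfn α)
    have h1 : ∫ u in (0:ℝ)..(-c), Gfn α (-u) = -((-c) ^ (2 - α) / ((1 - α) * (2 - α))) := by
      have : ∀ u : ℝ, Gfn α (-u) = -Gfn α u := Gfn_odd α
      simp only [this]
      rw [intervalIntegral.integral_neg, hnonneg (-c) (by linarith)]
    have h2 : ∫ u in (0:ℝ)..c, Gfn α u = -∫ u in (c:ℝ)..0, Gfn α u := by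
      rw [intervalIntegral.integral_symm]
    rw [h2, ← key, h1, abs_of_nonpos hc]
    ring


lemma innerInt {α : ℝ} (hα0 : 0 < α) (hα1 : α < 1) (s b : ℝ) :
    ∫ t in (0:ℝ)..b, |s - t| ^ (-α) = Gfn α s - Gfn α (s - b) := by
  have h := intervalIntegral.integral_comp_sub_left (a := 0) (b := b)
    (fun u => |u| ^ (-α)) s
  simp only [sub_zero] at h
  rw [h, absRpowInt' hα0 hα1]

lemma innerII {α : ℝ} (hα0 : 0 < α) (hα1 : α < 1) (s b : ℝ) :
    IntervalIntegrable (fun t => |s - t| ^ (-α)) volume 0 b := by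
  have h := (absRpowII (by linarith : (-1:ℝ) < -α) s (s - b)).comp_sub_left s
  simpa using h

lemma doubleVal {α : ℝ} (hα0 : 0 < α) (hα1 : α < 1) (x y : ℝ) (hx : 0 ≤ x) (hy : 0 ≤ y) :
    ∫ s in (0:ℝ)..x, (Gfn α s - Gfn α (s - y)) =
      (x ^ (2 - α) + y ^ (2 - α) - |x - y| ^ (2 - α)) / ((1 - α) * (2 - α)) := by
  have hcont := Gfn_continuous hα0 hα1
  have h1 : ∫ s in (0:ℝ)..x, Gfn α s = x ^ (2 - α) / ((1 - α) * (2 - α)) := by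
    rw [Gfn_int hα0 hα1 x, abs_of_nonneg hx]
  have h2 : ∫ s in (0:ℝ)..x, Gfn α (s - y) = (|x - y| ^ (2 - α) - y ^ (2 - α)) /
      ((1 - α) * (2 - α)) := by
    rw [intervalIntegral.integral_comp_sub_right (fun u => Gfn α u) y, zero_sub]
    have hadd := intervalIntegral.integral_add_adjacent_intervals
      (hcont.intervalIntegrable (μ := volume) (-y) 0) (hcont.intervalIntegrable (μ := volume) 0 (x - y))
    rw [← hadd, intervalIntegral.integral_symm, Gfn_int hα0 hα1, Gfn_int hα0 hα1,
      abs_neg, abs_of_nonneg hy]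
    ring
  rw [intervalIntegral.integral_sub (hcont.intervalIntegrable (μ := volume) 0 x)
    ((hcont.intervalIntegrable (μ := volume) (-y) (x - y)).comp_sub_right y |>.mono_set ?_), h1, h2]
  · ring
  · rw [show -y + y = (0:ℝ) by ring, show x - y + y = x by ring]


lemma measKer {α : ℝ} : Measurable (fun p : ℝ × ℝ => |p.1 - p.2| ^ (-α)) := by
  measurability

lemma rectInt {α : ℝ} (hα0 : 0 < α) (hα1 : α < 1) (x y : ℝ) (hx : 0 ≤ x) (hy : 0 ≤ y) :
    IntegrableOn (fun p : ℝ × ℝ => |p.1 - p.2| ^ (-α)) (Ioc 0 x ×ˢ Ioc 0 y) volume := by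
  have hcont := Gfn_continuous hα0 hα1
  rw [IntegrableOn, Measure.volume_eq_prod ℝ ℝ, ← Measure.prod_restrict]
  rw [integrable_prod_iff (measKer.aestronglyMeasurable)]
  constructor
  · refine ae_of_all _ fun s => ?_
    have := innerII hα0 hα1 s y
    rwa [intervalIntegrable_iff_integrableOn_Ioc_of_le hy] at this
  · have hval : ∀ s : ℝ, (∫ t, ‖|s - t| ^ (-α)‖ ∂(volume.restrict (Ioc 0 y)))
        = Gfn α s - Gfn α (s - y) := by
      intro s
      have hnorm : (fun t => ‖|s - t| ^ (-α)‖) = fun t => |s - t| ^ (-α) := by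
        funext t
        rw [Real.norm_eq_abs, abs_of_nonneg (Real.rpow_nonneg (abs_nonneg _) _)]
      rw [hnorm, ← intervalIntegral.integral_of_le hy, innerInt hα0 hα1]
    refine (Integrable.congr ?_ (ae_of_all _ fun s => (hval s).symm))
    exact ((hcont.sub (hcont.comp (continuous_id.sub continuous_const))).integrableOn_Ioc)

lemma prodVal {α : ℝ} (hα0 : 0 < α) (hα1 : α < 1) (x y : ℝ) (hx : 0 ≤ x) (hy : 0 ≤ y) :
    ∫ p in (Ioc 0 x ×ˢ Ioc 0 y), |p.1 - p.2| ^ (-α) =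
      (x ^ (2 - α) + y ^ (2 - α) - |x - y| ^ (2 - α)) / ((1 - α) * (2 - α)) := by
  have hI := rectInt hα0 hα1 x y hx hy
  rw [IntegrableOn, Measure.volume_eq_prod ℝ ℝ] at hI
  calc ∫ p in (Ioc 0 x ×ˢ Ioc 0 y), |p.1 - p.2| ^ (-α)
      = ∫ s in Ioc 0 x, ∫ t in Ioc 0 y, |s - t| ^ (-α) := by
        rw [Measure.volume_eq_prod ℝ ℝ]
        exact setIntegral_prod _ hI
    _ = ∫ s in (0:ℝ)..x, (Gfn α s - Gfn α (s - y)) := by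
        rw [← intervalIntegral.integral_of_le hx]
        apply intervalIntegral.integral_congr
        intro s _
        show (∫ t in Ioc 0 y, |s - t| ^ (-α)) = _
        rw [← intervalIntegral.integral_of_le hy, innerInt hα0 hα1]
    _ = _ := doubleVal hα0 hα1 x y hx hy


/-- Taqqu-type deterministic covariance asymptotics: if `|R(z)| ≤ min(1, C|z|^{-α})`
and `|z|^α R(z) → κ` as `|z| → ∞`, then for `H = 1 - α/2` and `x, y ≥ 0`,
`ε^{2H} ∫_0^{x/ε} ∫_0^{y/ε} R(u-v) du dv → (κ/(H(2H-1)))·(1/2)(x^{2H} + y^{2H} - |x-y|^{2H})`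
as `ε → 0⁺`. -/
theorem stmt8 (α : ℝ) (hα : α ∈ Ioo (0 : ℝ) 1) (κ C : ℝ) (hκ : 0 < κ) (hC : 0 < C)
    (H : ℝ) (hH : H = 1 - α / 2)
    (R : ℝ → ℝ) (hRm : Measurable R)
    (hRb : ∀ z : ℝ, z ≠ 0 → |R z| ≤ min 1 (C * |z| ^ (-α)))
    (hRlim : Tendsto (fun z => |z| ^ α * R z) (cocompact ℝ) (𝓝 κ))
    (x y : ℝ) (hx : 0 ≤ x) (hy : 0 ≤ y) :
    Tendsto
      (fun ε : ℝ => ε ^ (2 * H) * ∫ u in (0 : ℝ)..(x / ε), ∫ v in (0 : ℝ)..(y / ε), R (u - v))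
      (𝓝[>] (0 : ℝ))
      (𝓝 ((κ / (H * (2 * H - 1))) * (1 / 2) *
        (x ^ (2 * H) + y ^ (2 * H) - |x - y| ^ (2 * H)))) := by
  obtain ⟨hα0, hα1⟩ := hα
  have h2H : 2 * H = 2 - α := by rw [hH]; ring
  set Q : Set (ℝ × ℝ) := Ioc 0 x ×ˢ Ioc 0 y with hQdef
  -- the target value equals the integral of the limit kernel
  have hval : (κ / (H * (2 * H - 1))) * (1 / 2) *
      (x ^ (2 * H) + y ^ (2 * H) - |x - y| ^ (2 * H))
      = ∫ p in Q, κ * |p.1 - p.2| ^ (-α) := by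
    rw [MeasureTheory.integral_const_mul, prodVal hα0 hα1 x y hx hy, h2H]
    have hne1 : (1:ℝ) - α ≠ 0 := by linarith
    have hne2 : (2:ℝ) - α ≠ 0 := by linarith
    have hne3 : H * (2 * H - 1) ≠ 0 := by
      rw [hH]; intro h; rw [mul_eq_zero] at h
      rcases h with h | h <;> [linarith; linarith [h]]
    have hne4 : (1:ℝ) - α / 2 ≠ 0 := by linarith
    rw [hH]
    have hc : κ / ((1 - α / 2) * (2 - α - 1)) * (1 / 2) = κ / ((1 - α) * (2 - α)) := by
      rw [div_mul_eq_mul_div, mul_one_div, div_div]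
      congr 1
      ring
    rw [hc, div_mul_eq_mul_div, mul_div_assoc]
  rw [hval]
  -- a.e. the points of Q are off the diagonal
  have hdiagmeas : MeasurableSet {p : ℝ × ℝ | p.1 - p.2 = 0} :=
    (measurable_fst.sub measurable_snd) (measurableSet_singleton 0)
  have hdiag : (volume : Measure (ℝ × ℝ)) {p : ℝ × ℝ | p.1 - p.2 = 0} = 0 := by
    rw [Measure.volume_eq_prod]
    rw [Measure.measure_prod_null hdiagmeas]
    refine ae_of_all _ fun s => ?_
    have : (Prod.mk s ⁻¹' {p : ℝ × ℝ | p.1 - p.2 = 0}) = {s} := by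
      ext t; simp [sub_eq_zero, eq_comm]
    simp [this]
  have hae : ∀ᵐ p ∂(volume.restrict Q), p.1 - p.2 ≠ 0 := by
    refine ae_restrict_of_ae ?_
    rw [ae_iff]
    simpa only [not_not] using hdiag
  -- main convergence via dominated convergence on Q
  have hmain : Tendsto (fun ε : ℝ => ∫ p in Q, ε ^ (-α) * R ((p.1 - p.2) / ε))
      (𝓝[>] (0:ℝ)) (𝓝 (∫ p in Q, κ * |p.1 - p.2| ^ (-α))) := by
    apply tendsto_integral_filter_of_dominated_convergence
      (bound := fun p : ℝ × ℝ => C * |p.1 - p.2| ^ (-α))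
    · refine Eventually.of_forall fun ε => ?_
      exact (measurable_const.mul (hRm.comp
        ((measurable_fst.sub measurable_snd).div_const ε))).aestronglyMeasurable
    · filter_upwards [self_mem_nhdsWithin] with ε hε
      have hε' : (0:ℝ) < ε := hε
      filter_upwards [hae] with p hp
      have hw : (p.1 - p.2) / ε ≠ 0 := div_ne_zero hp hε'.ne'
      have hεpow : (0:ℝ) < ε ^ (-α) := Real.rpow_pos_of_pos hε' _
      have h1 : ‖ε ^ (-α) * R ((p.1 - p.2) / ε)‖ = ε ^ (-α) * |R ((p.1 - p.2) / ε)| := by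
        rw [norm_mul, Real.norm_eq_abs, Real.norm_eq_abs, abs_of_pos hεpow]
      rw [h1]
      calc ε ^ (-α) * |R ((p.1 - p.2) / ε)|
          ≤ ε ^ (-α) * (C * |(p.1 - p.2) / ε| ^ (-α)) := by
            exact mul_le_mul_of_nonneg_left ((hRb _ hw).trans (min_le_right _ _)) hεpow.le
        _ = C * |p.1 - p.2| ^ (-α) := by
            rw [abs_div, abs_of_pos hε', Real.div_rpow (abs_nonneg _) hε'.le]
            field_simp
    · exact (rectInt hα0 hα1 x y hx hy).const_mul C
    · filter_upwards [hae] with p hp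
      set z := p.1 - p.2 with hz
      have hzpos : (0:ℝ) < |z| := abs_pos.mpr hp
      have hcc : Tendsto (fun ε : ℝ => z / ε) (𝓝[>] (0:ℝ)) (cocompact ℝ) := by
        rw [cocompact_eq_atBot_atTop]
        have hinv : Tendsto (fun ε : ℝ => ε⁻¹) (𝓝[>] (0:ℝ)) atTop := tendsto_inv_nhdsGT_zero
        rcases hp.lt_or_gt with hneg | hpos
        · refine Tendsto.mono_right ?_ le_sup_left
          have := (tendsto_const_mul_atBot_of_neg hneg).mpr hinv
          simpa [div_eq_mul_inv] using this
        · refine Tendsto.mono_right ?_ le_sup_right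
          have := hinv.const_mul_atTop hpos
          simpa [div_eq_mul_inv] using this
      have h2 : Tendsto (fun ε : ℝ => |z / ε| ^ α * R (z / ε)) (𝓝[>] (0:ℝ)) (𝓝 κ) :=
        hRlim.comp hcc
      have h3 := h2.const_mul (|z| ^ (-α))
      rw [mul_comm] at h3
      refine Tendsto.congr' ?_ h3
      filter_upwards [self_mem_nhdsWithin] with ε hε
      have hε' : (0:ℝ) < ε := hε
      have habs : |z / ε| ^ α = |z| ^ α / ε ^ α := by
        rw [abs_div, abs_of_pos hε', Real.div_rpow (abs_nonneg _) hε'.le]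
      have hzz : |z| ^ (-α) * |z| ^ α = 1 := by
        rw [← Real.rpow_add hzpos]; simp
      have hεa : ε ^ (-α) = (ε ^ α)⁻¹ := Real.rpow_neg hε'.le α
      rw [habs, show |z| ^ (-α) * (|z| ^ α / ε ^ α * R (z / ε))
        = (|z| ^ (-α) * |z| ^ α) * R (z / ε) * (ε ^ α)⁻¹ by ring, hzz, one_mul, hεa]
      ring
  -- identify the integrand with the original expression for ε > 0
  refine Tendsto.congr' ?_ hmain
  filter_upwards [self_mem_nhdsWithin] with ε hε
  have hε' : (0:ℝ) < ε := hε
  have hεne : ε ≠ 0 := hε'.ne'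
  -- integrability of the rescaled kernel on Q
  have hQfin : volume Q < ⊤ := by
    rw [hQdef, Measure.volume_eq_prod, Measure.prod_prod]
    exact ENNReal.mul_lt_top measure_Ioc_lt_top measure_Ioc_lt_top
  have hRmeas : Measurable fun p : ℝ × ℝ => R ((p.1 - p.2) / ε) :=
    hRm.comp ((measurable_fst.sub measurable_snd).div_const ε)
  have hIeps : IntegrableOn (fun p : ℝ × ℝ => R ((p.1 - p.2) / ε)) Q volume := by
    refine Integrable.mono (g := fun _ : ℝ × ℝ => (1:ℝ))
      (integrableOn_const (C := (1:ℝ)) hQfin.ne) hRmeas.aestronglyMeasurable ?_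
    filter_upwards [hae] with p hp
    have hw : (p.1 - p.2) / ε ≠ 0 := div_ne_zero hp hεne
    rw [Real.norm_eq_abs, norm_one]
    exact (hRb _ hw).trans (min_le_left _ _)
  -- substitution lemma
  have key : ∀ (f : ℝ → ℝ) (b : ℝ), ∫ t in (0:ℝ)..b, f (t / ε) = ε * ∫ t in (0:ℝ)..(b / ε), f t := by
    intro f b
    have := intervalIntegral.integral_comp_div (a := 0) (b := b) (c := ε) f hεne
    simpa [zero_div] using this
  -- compute the set integral
  calc ∫ p in Q, ε ^ (-α) * R ((p.1 - p.2) / ε)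
      = ε ^ (-α) * ∫ p in Q, R ((p.1 - p.2) / ε) := MeasureTheory.integral_const_mul _ _
    _ = ε ^ (-α) * ∫ s in (0:ℝ)..x, ∫ t in (0:ℝ)..y, R ((s - t) / ε) := by
        congr 1
        rw [hQdef, Measure.volume_eq_prod]
        rw [setIntegral_prod _ (by rw [← Measure.volume_eq_prod]; exact hIeps)]
        rw [← intervalIntegral.integral_of_le hx]
        apply intervalIntegral.integral_congr
        intro s _
        show (∫ t in Ioc 0 y, R ((s - t) / ε)) = _
        rw [← intervalIntegral.integral_of_le hy]
    _ = ε ^ (-α) * (ε * (ε * ∫ u in (0:ℝ)..(x / ε), ∫ v in (0:ℝ)..(y / ε), R (u - v))) := by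
        congr 1
        have hinner : ∀ s : ℝ, ∫ t in (0:ℝ)..y, R ((s - t) / ε)
            = ε * ∫ w in (0:ℝ)..(y / ε), R (s / ε - w) := by
          intro s
          have h1 : ∫ t in (0:ℝ)..y, R ((s - t) / ε) = ∫ t in (0:ℝ)..y, R (s / ε - t / ε) := by
            apply intervalIntegral.integral_congr
            intro t _
            show R ((s - t) / ε) = R (s / ε - t / ε)
            rw [sub_div]
          rw [h1]
          exact key (fun w => R (s / ε - w)) y
        simp only [hinner]
        rw [intervalIntegral.integral_const_mul]
        have houter : ∫ s in (0:ℝ)..x, ∫ w in (0:ℝ)..(y / ε), R (s / ε - w)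
            = ε * ∫ u in (0:ℝ)..(x / ε), ∫ w in (0:ℝ)..(y / ε), R (u - w) :=
          key (fun u => ∫ w in (0:ℝ)..(y / ε), R (u - w)) x
        rw [houter]
    _ = ε ^ (2 * H) * ∫ u in (0:ℝ)..(x / ε), ∫ v in (0:ℝ)..(y / ε), R (u - v) := by
        have hpow : ε ^ (2 * H) = ε ^ (-α) * ε * ε := by
          rw [h2H, show (2:ℝ) - α = -α + 1 + 1 by ring, Real.rpow_add hε',
            Real.rpow_add hε', Real.rpow_one]
        rw [hpow]; ring
end
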